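/- arXiv:1309.1771 — 8 statements merged into one kernel-verified Lean document; each statement's English description precedes it below -/
import Mathlib

section
/- Let C_{α,β} = F_{i_1}, F_{j_1}, …, F_{i_s}, F_{j_s} be a simplicial even walk in a simplicial complex Δ. Then for every index i in the support of α there exist two distinct indices j, k in the support of β such that F_i ∩ F_j ≠ ∅ and F_i ∩ F_k ≠ ∅; and symmetrically, for every j in the support of β there exist two distinct indices i, k in the support of α with F_j ∩ F_i ≠ ∅ and F_j ∩ F_k ≠ ∅. -/
open Finset

/-- The `α`-degree of a vertex `x` : the number of entries `t` of the tuple `α`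
with `x ∈ F (α t)`, counted with multiplicity. -/
def walkDeg {V : Type*} [DecidableEq V] {q s : ℕ} (F : Fin q → Finset V)
    (α : Fin s → Fin q) (x : V) : ℕ :=
  (Finset.univ.filter fun t : Fin s => x ∈ F (α t)).card

/-- The sequence of facets `C_{α,β} = F_{i_1},F_{j_1},…,F_{i_s},F_{j_s}` is a
simplicial even walk. -/
def IsEvenWalk {V : Type*} [DecidableEq V] {q s : ℕ} (F : Fin q → Finset V)
    (α β : Fin s → Fin q) : Prop :=
  2 ≤ s ∧ Disjoint (Set.range α) (Set.range β) ∧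
    ∀ i ∈ Set.range α, ∀ j ∈ Set.range β,
      ¬ (↑(F i \ F j) ⊆ {x : V | walkDeg F β x < walkDeg F α x}) ∧
      ¬ (↑(F j \ F i) ⊆ {x : V | walkDeg F α x < walkDeg F β x})

/-- The facets of a simplicial complex: each is nonempty, and none contains another. -/
def IsFacetFamily {V : Type*} [DecidableEq V] {q : ℕ} (F : Fin q → Finset V) : Prop :=
  (∀ i, (F i).Nonempty) ∧ ∀ i j : Fin q, F i ⊆ F j → i = j


lemma walkDeg_pos {V : Type*} [DecidableEq V] {q s : ℕ} (F : Fin q → Finset V)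
    (α : Fin s → Fin q) {x : V} {t : Fin s} (hx : x ∈ F (α t)) : 0 < walkDeg F α x :=
  Finset.card_pos.mpr ⟨t, by simp [hx]⟩

lemma exists_of_walkDeg_pos {V : Type*} [DecidableEq V] {q s : ℕ} (F : Fin q → Finset V)
    (α : Fin s → Fin q) {x : V} (h : 0 < walkDeg F α x) : ∃ t, x ∈ F (α t) := by
  obtain ⟨t, ht⟩ := Finset.card_pos.mp h
  exact ⟨t, (Finset.mem_filter.mp ht).2⟩

lemma key1 {V : Type*} [DecidableEq V] {q s : ℕ} (F : Fin q → Finset V)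
    {α β : Fin s → Fin q} (h : IsEvenWalk F α β) {i j0 : Fin q}
    (hi : i ∈ Set.range α) (hj : j0 ∈ Set.range β) :
    ∃ k ∈ Set.range β, k ≠ j0 ∧ (F i ∩ F k).Nonempty := by
  obtain ⟨-, -, hcond⟩ := h
  obtain ⟨h1, -⟩ := hcond i hi j0 hj
  rw [Set.not_subset] at h1
  obtain ⟨x, hx, hx2⟩ := h1
  rw [Finset.mem_coe, Finset.mem_sdiff] at hx
  simp only [Set.mem_setOf_eq, not_lt] at hx2
  obtain ⟨t, rfl⟩ := hi
  have hpos : 0 < walkDeg F β x := lt_of_lt_of_le (walkDeg_pos F α hx.1) hx2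
  obtain ⟨t', ht'⟩ := exists_of_walkDeg_pos F β hpos
  exact ⟨β t', ⟨t', rfl⟩, fun he => hx.2 (he ▸ ht'), ⟨x, Finset.mem_inter.mpr ⟨hx.1, ht'⟩⟩⟩

lemma key2 {V : Type*} [DecidableEq V] {q s : ℕ} (F : Fin q → Finset V)
    {α β : Fin s → Fin q} (h : IsEvenWalk F α β) {j i0 : Fin q}
    (hj : j ∈ Set.range β) (hi : i0 ∈ Set.range α) :
    ∃ k ∈ Set.range α, k ≠ i0 ∧ (F j ∩ F k).Nonempty := by
  obtain ⟨-, -, hcond⟩ := h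
  obtain ⟨-, h2⟩ := hcond i0 hi j hj
  rw [Set.not_subset] at h2
  obtain ⟨x, hx, hx2⟩ := h2
  rw [Finset.mem_coe, Finset.mem_sdiff] at hx
  simp only [Set.mem_setOf_eq, not_lt] at hx2
  obtain ⟨t, rfl⟩ := hj
  have hpos : 0 < walkDeg F α x := lt_of_lt_of_le (walkDeg_pos F β hx.1) hx2
  obtain ⟨t', ht'⟩ := exists_of_walkDeg_pos F α hpos
  exact ⟨α t', ⟨t', rfl⟩, fun he => hx.2 (he ▸ ht'), ⟨x, Finset.mem_inter.mpr ⟨hx.1, ht'⟩⟩⟩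

theorem stmt0 {V : Type*} [DecidableEq V] {q s : ℕ} (F : Fin q → Finset V)
    (hF : IsFacetFamily F) (α β : Fin s → Fin q) (h : IsEvenWalk F α β) :
    (∀ i ∈ Set.range α, ∃ j ∈ Set.range β, ∃ k ∈ Set.range β,
        j ≠ k ∧ (F i ∩ F j).Nonempty ∧ (F i ∩ F k).Nonempty) ∧
    (∀ j ∈ Set.range β, ∃ i ∈ Set.range α, ∃ k ∈ Set.range α,
        i ≠ k ∧ (F j ∩ F i).Nonempty ∧ (F j ∩ F k).Nonempty) := by
  have hs : 0 < s := lt_of_lt_of_le (by norm_num) h.1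
  constructor
  · intro i hi
    obtain ⟨k1, hk1, -, hk1n⟩ := key1 F h hi ⟨⟨0, hs⟩, rfl⟩
    obtain ⟨k2, hk2, hne, hk2n⟩ := key1 F h hi hk1
    exact ⟨k2, hk2, k1, hk1, hne, hk2n, hk1n⟩
  · intro j hj
    obtain ⟨k1, hk1, -, hk1n⟩ := key2 F h hj ⟨⟨0, hs⟩, rfl⟩
    obtain ⟨k2, hk2, hne, hk2n⟩ := key2 F h hj hk1
    exact ⟨k2, hk2, k1, hk1, hne, hk2n, hk1n⟩
end

section
/- Every simplicial even walk C_{α,β} = F_{i_1}, F_{j_1}, …, F_{i_s}, F_{j_s} contains at least 4 distinct facets; that is, the set of facets {F_{i_1}, F_{j_1}, …, F_{i_s}, F_{j_s}} has cardinality at least 4. -/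
open Finset

lemma evenWalk_symm {V : Type*} [DecidableEq V] {q s : ℕ} (F : Fin q → Finset V)
    {α β : Fin s → Fin q} (h : IsEvenWalk F α β) : IsEvenWalk F β α :=
  ⟨h.1, h.2.1.symm, fun j hj i hi => ⟨(h.2.2 i hi j hj).2, (h.2.2 i hi j hj).1⟩⟩

lemma evenWalk_not_const {V : Type*} [DecidableEq V] {q s : ℕ} (F : Fin q → Finset V)
    (_hF : IsFacetFamily F) {α β : Fin s → Fin q} (h : IsEvenWalk F α β) :
    ∃ t₁ t₂ : Fin s, α t₁ ≠ α t₂ := by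
  by_contra hc
  push_neg at hc
  have hs := h.1
  set t0 : Fin s := ⟨0, by omega⟩ with ht0
  set c := α t0 with hcdef
  set j := β t0 with hjdef
  have key := (h.2.2 c ⟨t0, rfl⟩ j ⟨t0, rfl⟩).1
  obtain ⟨x, hx, hnot⟩ := Set.not_subset.mp key
  simp only [Finset.coe_sdiff, Set.mem_diff, Finset.mem_coe, Finset.mem_sdiff] at hx
  have hxc : x ∈ F c := hx.1
  have hxj : x ∉ F j := hx.2
  have hle : walkDeg F α x ≤ walkDeg F β x := by
    simpa [Set.mem_setOf_eq, Nat.not_lt] using hnot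
  have hαfull : walkDeg F α x = s := by
    have : (Finset.univ.filter fun t : Fin s => x ∈ F (α t)) = Finset.univ := by
      apply Finset.eq_univ_iff_forall.mpr
      intro t
      simp only [Finset.mem_filter, Finset.mem_univ, true_and]
      rw [hc t t0]
      exact hxc
    simp [walkDeg, this]
  have hβle : walkDeg F β x ≤ s := by
    have := Finset.card_filter_le (Finset.univ : Finset (Fin s))
      (fun t : Fin s => x ∈ F (β t))
    simpa [walkDeg] using this
  have hβfull : walkDeg F β x = s := le_antisymm hβle (by omega)
  have hfil : (Finset.univ.filter fun t : Fin s => x ∈ F (β t)) = Finset.univ := by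
    apply Finset.eq_of_subset_of_card_le (Finset.filter_subset _ _)
    simp [← hβfull, walkDeg]
  have : t0 ∈ (Finset.univ.filter fun t : Fin s => x ∈ F (β t)) := by rw [hfil]; exact Finset.mem_univ t0
  simp only [Finset.mem_filter] at this
  exact hxj this.2

theorem stmt2 {V : Type*} [DecidableEq V] {q s : ℕ} (F : Fin q → Finset V)
    (hF : IsFacetFamily F) (α β : Fin s → Fin q) (h : IsEvenWalk F α β) :
    4 ≤ ((Finset.univ.image fun t : Fin s => F (α t)) ∪
          (Finset.univ.image fun t : Fin s => F (β t))).card := by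
  have hFinj : Function.Injective F := fun i j hij => hF.2 i j hij.le
  set A := Finset.univ.image fun t : Fin s => F (α t) with hA
  set B := Finset.univ.image fun t : Fin s => F (β t) with hB
  have hdisj : Disjoint A B := by
    rw [Finset.disjoint_left]
    intro a haA haB
    simp only [hA, hB, Finset.mem_image, Finset.mem_univ, true_and] at haA haB
    obtain ⟨t₁, ht₁⟩ := haA
    obtain ⟨t₂, ht₂⟩ := haB
    have : α t₁ = β t₂ := hFinj (ht₁.trans ht₂.symm)
    exact Set.disjoint_left.mp h.2.1 ⟨t₁, rfl⟩ ⟨t₂, this.symm ▸ rfl⟩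
  have hAcard : 2 ≤ A.card := by
    obtain ⟨t₁, t₂, hne⟩ := evenWalk_not_const F hF h
    have h12 : F (α t₁) ≠ F (α t₂) := fun e => hne (hFinj e)
    have h1 : F (α t₁) ∈ A := Finset.mem_image.mpr ⟨t₁, Finset.mem_univ t₁, rfl⟩
    have h2 : F (α t₂) ∈ A := Finset.mem_image.mpr ⟨t₂, Finset.mem_univ t₂, rfl⟩
    have := Finset.one_lt_card.mpr ⟨F (α t₁), h1, F (α t₂), h2, h12⟩
    omega
  have hBcard : 2 ≤ B.card := by
    obtain ⟨t₁, t₂, hne⟩ := evenWalk_not_const F hF (evenWalk_symm F h)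
    have h12 : F (β t₁) ≠ F (β t₂) := fun e => hne (hFinj e)
    have h1 : F (β t₁) ∈ B := Finset.mem_image.mpr ⟨t₁, Finset.mem_univ t₁, rfl⟩
    have h2 : F (β t₂) ∈ B := Finset.mem_image.mpr ⟨t₂, Finset.mem_univ t₂, rfl⟩
    have := Finset.one_lt_card.mpr ⟨F (β t₁), h1, F (β t₂), h2, h12⟩
    omega
  rw [Finset.card_union_of_disjoint hdisj]
  omega
end

section
/- Every special cycle of even length is a simplicial even walk: if F_1, …, F_{2s} (s ≥ 2) is a special cycle under the written order, then setting α = (1,3,…,2s−1) and β = (2,4,…,2s), the sequence C_{α,β} = F_1, F_2, …, F_{2s} is a simplicial even walk. -/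
open Finset

/-- Successor modulo `m` on `Fin m`. -/
def cyclicNext {m : ℕ} (i : Fin m) : Fin m := ⟨(i.val + 1) % m, Nat.mod_lt _ i.pos⟩

/-- A sequence of `m ≥ 3` distinct facets with empty total intersection is a
special cycle if consecutive facets (cyclically) share a vertex not belonging
to any other facet of the sequence. -/
def IsSpecialCycle {V : Type*} [DecidableEq V] {m : ℕ} (G : Fin m → Finset V) : Prop :=
  3 ≤ m ∧ Function.Injective G ∧ (∀ x : V, ∃ i, x ∉ G i) ∧
    ∀ i : Fin m, (G i ∩ G (cyclicNext i)).Nonempty ∧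
      ¬ (G i ∩ G (cyclicNext i) ⊆
          (Finset.univ.filter fun j => j ≠ i ∧ j ≠ cyclicNext i).biUnion G)

lemma cycle_witness {V : Type*} [DecidableEq V] {m : ℕ} {G : Fin m → Finset V}
    (hcyc : ∀ i : Fin m, (G i ∩ G (cyclicNext i)).Nonempty ∧
      ¬ (G i ∩ G (cyclicNext i) ⊆
          (Finset.univ.filter fun j => j ≠ i ∧ j ≠ cyclicNext i).biUnion G))
    (k : Fin m) :
    ∃ x, ∀ a, x ∈ G a ↔ (a = k ∨ a = cyclicNext k) := by
  obtain ⟨x, hx1, hx2⟩ := Finset.not_subset.mp (hcyc k).2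
  rw [Finset.mem_inter] at hx1
  refine ⟨x, fun a => ⟨fun hmem => ?_, fun h => ?_⟩⟩
  · by_contra hc
    push_neg at hc
    exact hx2 (Finset.mem_biUnion.mpr ⟨a, by simp [hc.1, hc.2], hmem⟩)
  · rcases h with rfl | rfl
    · exact hx1.1
    · exact hx1.2

lemma deg_one_lt0 {s : ℕ} (t : Fin s) : 2 * t.val < 2 * s := by have := t.isLt; omega

lemma deg_one_lt1 {s : ℕ} (t : Fin s) : 2 * t.val + 1 < 2 * s := by have := t.isLt; omega

lemma deg_one {V : Type*} [DecidableEq V] {s : ℕ} (hs : 2 ≤ s)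
    (F : Fin (2 * s) → Finset V) (x : V) (k : Fin (2 * s))
    (hx : ∀ a, x ∈ F a ↔ (a = k ∨ a = cyclicNext k)) :
    walkDeg F (fun t : Fin s => ⟨2 * t.val, deg_one_lt0 t⟩) x = 1 ∧
    walkDeg F (fun t : Fin s => ⟨2 * t.val + 1, deg_one_lt1 t⟩) x = 1 := by
  have hk : k.val < 2 * s := k.isLt
  obtain ⟨n, hn⟩ : ∃ n, (k.val + 1) % (2 * s) = n := ⟨_, rfl⟩
  have hn' : n < 2 * s := hn ▸ Nat.mod_lt _ (by omega)
  have hcase : n = k.val + 1 ∨ (k.val + 1 = 2 * s ∧ n = 0) := by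
    rcases Nat.lt_or_ge (k.val + 1) (2 * s) with h | h
    · exact Or.inl (by rw [← hn, Nat.mod_eq_of_lt h])
    · have h2 : k.val + 1 = 2 * s := by omega
      exact Or.inr ⟨h2, by rw [← hn, h2, Nat.mod_self]⟩
  have hx' : ∀ a : Fin (2 * s), x ∈ F a ↔ (a.val = k.val ∨ a.val = n) := by
    intro a
    rw [hx]
    simp only [Fin.ext_iff, cyclicNext]
    rw [hn]
  constructor <;> unfold walkDeg
  · rw [Finset.filter_congr (fun t _ => hx' _)]
    rcases Nat.mod_two_eq_zero_or_one k.val with hp | hp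
    · rw [Finset.card_eq_one]
      refine ⟨⟨k.val / 2, by omega⟩, ?_⟩
      ext t
      simp only [Finset.mem_filter, Finset.mem_univ, true_and, Finset.mem_singleton,
        Fin.ext_iff]
      have := t.isLt
      omega
    · rw [Finset.card_eq_one]
      refine ⟨⟨n / 2, by omega⟩, ?_⟩
      ext t
      simp only [Finset.mem_filter, Finset.mem_univ, true_and, Finset.mem_singleton,
        Fin.ext_iff]
      have := t.isLt
      omega
  · rw [Finset.filter_congr (fun t _ => hx' _)]
    rcases Nat.mod_two_eq_zero_or_one k.val with hp | hp
    · rw [Finset.card_eq_one]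
      refine ⟨⟨n / 2, by omega⟩, ?_⟩
      ext t
      simp only [Finset.mem_filter, Finset.mem_univ, true_and, Finset.mem_singleton,
        Fin.ext_iff]
      have := t.isLt
      omega
    · rw [Finset.card_eq_one]
      refine ⟨⟨k.val / 2, by omega⟩, ?_⟩
      ext t
      simp only [Finset.mem_filter, Finset.mem_univ, true_and, Finset.mem_singleton,
        Fin.ext_iff]
      have := t.isLt
      omega

theorem stmt5 {V : Type*} [DecidableEq V] {s : ℕ} (hs : 2 ≤ s)
    (F : Fin (2 * s) → Finset V) (h : IsSpecialCycle F) :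
    IsEvenWalk F (fun t : Fin s => ⟨2 * t.val, by have := t.isLt; omega⟩)
      (fun t : Fin s => ⟨2 * t.val + 1, by have := t.isLt; omega⟩) := by
  obtain ⟨h3, hinj, hcov, hcyc⟩ := h
  refine ⟨hs, ?_, ?_⟩
  · rw [Set.disjoint_left]
    rintro a ⟨t, rfl⟩ ⟨u, hu⟩
    have := congrArg Fin.val hu
    simp only [] at this
    omega
  · rintro i ⟨ti, rfl⟩ j ⟨tj, rfl⟩
    have hti := ti.isLt
    have htj := tj.isLt
    constructor
    · -- ¬ (F i \ F j ⊆ {x | degβ < degα})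
      by_cases hcase : tj.val = ti.val
      · -- j = cyclicNext i; use k = predecessor of i
        by_cases h0 : ti.val = 0
        · obtain ⟨x, hx⟩ := cycle_witness hcyc ⟨2 * s - 1, by omega⟩
          obtain ⟨hd1, hd2⟩ := deg_one hs F x _ hx
          have hnext : cyclicNext (⟨2 * s - 1, by omega⟩ : Fin (2 * s)) = ⟨0, by omega⟩ :=
            Fin.ext (show (2 * s - 1 + 1) % (2 * s) = 0 by
              rw [show 2 * s - 1 + 1 = 2 * s by omega, Nat.mod_self])
          rw [hnext] at hx
          have hxi : x ∈ F ⟨2 * ti.val, by omega⟩ :=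
            (hx _).mpr (Or.inr (by rw [Fin.mk.injEq]; omega))
          have hxj : x ∉ F ⟨2 * tj.val + 1, by omega⟩ := by
            intro hmem
            rcases (hx _).mp hmem with he | he <;> rw [Fin.mk.injEq] at he <;> omega
          intro hsub
          have := hsub (Finset.mem_coe.mpr (Finset.mem_sdiff.mpr ⟨hxi, hxj⟩))
          simp only [Set.mem_setOf_eq] at this
          omega
        · obtain ⟨x, hx⟩ := cycle_witness hcyc ⟨2 * ti.val - 1, by omega⟩
          obtain ⟨hd1, hd2⟩ := deg_one hs F x _ hx
          have hnext : cyclicNext (⟨2 * ti.val - 1, by omega⟩ : Fin (2 * s)) =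
              ⟨2 * ti.val, by omega⟩ :=
            Fin.ext (show (2 * ti.val - 1 + 1) % (2 * s) = 2 * ti.val by
              rw [show 2 * ti.val - 1 + 1 = 2 * ti.val by omega,
                Nat.mod_eq_of_lt (by omega)])
          rw [hnext] at hx
          have hxi : x ∈ F ⟨2 * ti.val, by omega⟩ := (hx _).mpr (Or.inr rfl)
          have hxj : x ∉ F ⟨2 * tj.val + 1, by omega⟩ := by
            intro hmem
            rcases (hx _).mp hmem with he | he <;> rw [Fin.mk.injEq] at he <;> omega
          intro hsub
          have := hsub (Finset.mem_coe.mpr (Finset.mem_sdiff.mpr ⟨hxi, hxj⟩))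
          simp only [Set.mem_setOf_eq] at this
          omega
      · -- j ≠ cyclicNext i; use k = i
        obtain ⟨x, hx⟩ := cycle_witness hcyc ⟨2 * ti.val, by omega⟩
        obtain ⟨hd1, hd2⟩ := deg_one hs F x _ hx
        have hnext : cyclicNext (⟨2 * ti.val, by omega⟩ : Fin (2 * s)) =
            ⟨2 * ti.val + 1, by omega⟩ :=
          Fin.ext (show (2 * ti.val + 1) % (2 * s) = 2 * ti.val + 1 from
            Nat.mod_eq_of_lt (by omega))
        rw [hnext] at hx
        have hxi : x ∈ F ⟨2 * ti.val, by omega⟩ := (hx _).mpr (Or.inl rfl)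
        have hxj : x ∉ F ⟨2 * tj.val + 1, by omega⟩ := by
          intro hmem
          rcases (hx _).mp hmem with he | he <;> rw [Fin.mk.injEq] at he <;> omega
        intro hsub
        have := hsub (Finset.mem_coe.mpr (Finset.mem_sdiff.mpr ⟨hxi, hxj⟩))
        simp only [Set.mem_setOf_eq] at this
        omega
    · -- ¬ (F j \ F i ⊆ {x | degα < degβ})
      by_cases hcase : 2 * ti.val = (2 * tj.val + 2) % (2 * s)
      · -- i = cyclicNext j; use k = ⟨2*tj⟩ so that cyclicNext k = j
        obtain ⟨x, hx⟩ := cycle_witness hcyc ⟨2 * tj.val, by omega⟩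
        obtain ⟨hd1, hd2⟩ := deg_one hs F x _ hx
        have hm2 : (2 * tj.val + 2) % (2 * s) = 2 * tj.val + 2 ∨
            (2 * tj.val + 2 = 2 * s ∧ (2 * tj.val + 2) % (2 * s) = 0) := by
          rcases Nat.lt_or_ge (2 * tj.val + 2) (2 * s) with h | h
          · exact Or.inl (Nat.mod_eq_of_lt h)
          · have h2 : 2 * tj.val + 2 = 2 * s := by omega
            exact Or.inr ⟨h2, by rw [h2, Nat.mod_self]⟩
        have hnext : cyclicNext (⟨2 * tj.val, by omega⟩ : Fin (2 * s)) =
            ⟨2 * tj.val + 1, by omega⟩ :=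
          Fin.ext (show (2 * tj.val + 1) % (2 * s) = 2 * tj.val + 1 from
            Nat.mod_eq_of_lt (by omega))
        rw [hnext] at hx
        have hxj : x ∈ F ⟨2 * tj.val + 1, by omega⟩ := (hx _).mpr (Or.inr rfl)
        have hxi : x ∉ F ⟨2 * ti.val, by omega⟩ := by
          intro hmem
          rcases (hx _).mp hmem with he | he <;> rw [Fin.mk.injEq] at he <;> omega
        intro hsub
        have := hsub (Finset.mem_coe.mpr (Finset.mem_sdiff.mpr ⟨hxj, hxi⟩))
        simp only [Set.mem_setOf_eq] at this
        omega
      · -- i ≠ cyclicNext j; use k = j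
        obtain ⟨x, hx⟩ := cycle_witness hcyc ⟨2 * tj.val + 1, by omega⟩
        obtain ⟨hd1, hd2⟩ := deg_one hs F x _ hx
        have hnext : cyclicNext (⟨2 * tj.val + 1, by omega⟩ : Fin (2 * s)) =
            ⟨(2 * tj.val + 2) % (2 * s), Nat.mod_lt _ (by omega)⟩ :=
          Fin.ext (show (2 * tj.val + 1 + 1) % (2 * s) = (2 * tj.val + 2) % (2 * s) by
            rw [show 2 * tj.val + 1 + 1 = 2 * tj.val + 2 by omega])
        rw [hnext] at hx
        have hxj : x ∈ F ⟨2 * tj.val + 1, by omega⟩ := (hx _).mpr (Or.inl rfl)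
        have hxi : x ∉ F ⟨2 * ti.val, by omega⟩ := by
          intro hmem
          rcases (hx _).mp hmem with he | he <;> rw [Fin.mk.injEq] at he <;> omega
        intro hsub
        have := hsub (Finset.mem_coe.mpr (Finset.mem_sdiff.mpr ⟨hxj, hxi⟩))
        simp only [Set.mem_setOf_eq] at this
        omega
end

section
/- Let G be a simple graph and let e_1, e_2, …, e_{2s} (s ≥ 2) be a walk in G, i.e., e_t = {x_t, x_{t+1}} is an edge of G for each t = 1,…,2s, for some list of vertices x_1,…,x_{2s+1}. Then the walk is closed (x_1 = x_{2s+1}) if and only if every vertex of G occurs among the odd-indexed edges e_1, e_3, …, e_{2s−1} (counted with multiplicity) exactly as many times as it occurs among the even-indexed edges e_2, e_4, …, e_{2s} (counted with multiplicity); equivalently, the product of the edge monomials x_t x_{t+1} over odd t equals the product over even t. -/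
open Finset

private lemma ind_split {V : Type*} [DecidableEq V] {v a b : V} (hab : a ≠ b) :
    (if v = a ∨ v = b then (1:ℕ) else 0) =
      (if v = a then 1 else 0) + (if v = b then 1 else 0) := by
  by_cases h1 : v = a <;> by_cases h2 : v = b <;> simp_all

private lemma key {V : Type*} [DecidableEq V] (y : ℕ → V) (v : V) :
    ∀ s : ℕ, (∀ t < 2 * s, y t ≠ y (t + 1)) →
      (∑ t ∈ Finset.range (2 * s),
          if t % 2 = 0 ∧ (v = y t ∨ v = y (t + 1)) then (1:ℕ) else 0)
        + (if v = y (2 * s) then 1 else 0)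
      = (∑ t ∈ Finset.range (2 * s),
          if t % 2 = 1 ∧ (v = y t ∨ v = y (t + 1)) then (1:ℕ) else 0)
        + (if v = y 0 then 1 else 0) := by
  intro s
  induction s with
  | zero => simp
  | succ n ih =>
    intro hne
    have h2 : 2 * (n + 1) = (2 * n + 1) + 1 := by ring
    rw [h2, Finset.sum_range_succ, Finset.sum_range_succ,
        Finset.sum_range_succ, Finset.sum_range_succ]
    have he0 : (2 * n) % 2 = 0 := Nat.mul_mod_right 2 n
    have he1 : (2 * n + 1) % 2 = 1 := by omega
    have hih := ih (fun t ht => hne t (by omega))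
    have hd1 : y (2 * n) ≠ y (2 * n + 1) := hne _ (by omega)
    have hd2 : y (2 * n + 1) ≠ y (2 * n + 1 + 1) := hne _ (by omega)
    have e1 : (if (2 * n) % 2 = 0 ∧ (v = y (2 * n) ∨ v = y (2 * n + 1)) then (1:ℕ) else 0)
        = (if v = y (2 * n) then 1 else 0) + (if v = y (2 * n + 1) then 1 else 0) := by
      rw [← ind_split hd1]; simp [he0]
    have e2 : (if (2 * n + 1) % 2 = 0 ∧ (v = y (2 * n + 1) ∨ v = y (2 * n + 1 + 1)) then (1:ℕ) else 0) = 0 := by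
      simp [he1]
    have e3 : (if (2 * n) % 2 = 1 ∧ (v = y (2 * n) ∨ v = y (2 * n + 1)) then (1:ℕ) else 0) = 0 := by
      simp [he0]
    have e4 : (if (2 * n + 1) % 2 = 1 ∧ (v = y (2 * n + 1) ∨ v = y (2 * n + 1 + 1)) then (1:ℕ) else 0)
        = (if v = y (2 * n + 1) then 1 else 0) + (if v = y (2 * n + 1 + 1) then 1 else 0) := by
      rw [← ind_split hd2]; simp [he1]
    rw [e1, e2, e3, e4]
    have : (2 * n + 1) + 1 = 2 * (n + 1) := by ring
    rw [this]
    omega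

theorem stmt6 {V : Type*} [DecidableEq V] (G : SimpleGraph V) {s : ℕ} (hs : 2 ≤ s)
    (x : Fin (2 * s + 1) → V)
    (hwalk : ∀ t : Fin (2 * s), G.Adj (x t.castSucc) (x t.succ)) :
    x ⟨0, by omega⟩ = x ⟨2 * s, by omega⟩ ↔
      ∀ v : V,
        (Finset.univ.filter fun t : Fin (2 * s) =>
            t.val % 2 = 0 ∧ (v = x t.castSucc ∨ v = x t.succ)).card =
        (Finset.univ.filter fun t : Fin (2 * s) =>
            t.val % 2 = 1 ∧ (v = x t.castSucc ∨ v = x t.succ)).card := by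
  set y : ℕ → V := fun n => x ⟨n % (2 * s + 1), Nat.mod_lt _ (by omega)⟩ with hy
  have hyx : ∀ n (h : n < 2 * s + 1), y n = x ⟨n, h⟩ := by
    intro n h
    simp only [hy]
    congr 1
    exact Fin.ext (Nat.mod_eq_of_lt h)
  have hcast : ∀ t : Fin (2 * s), x t.castSucc = y t.val ∧ x t.succ = y (t.val + 1) := by
    intro t
    constructor
    · rw [hyx t.val (by omega)]; rfl
    · rw [hyx (t.val + 1) (by omega)]; rfl
  have hne : ∀ t < 2 * s, y t ≠ y (t + 1) := by
    intro t ht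
    have := (hwalk ⟨t, ht⟩).ne
    rwa [(hcast ⟨t, ht⟩).1, (hcast ⟨t, ht⟩).2] at this
  have hcards : ∀ v : V,
      (Finset.univ.filter fun t : Fin (2 * s) =>
          t.val % 2 = 0 ∧ (v = x t.castSucc ∨ v = x t.succ)).card
        + (if v = y (2 * s) then 1 else 0)
      = (Finset.univ.filter fun t : Fin (2 * s) =>
          t.val % 2 = 1 ∧ (v = x t.castSucc ∨ v = x t.succ)).card
        + (if v = y 0 then 1 else 0) := by
    intro v
    have c0 : (Finset.univ.filter fun t : Fin (2 * s) =>
          t.val % 2 = 0 ∧ (v = x t.castSucc ∨ v = x t.succ)).card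
        = ∑ t ∈ Finset.range (2 * s),
            if t % 2 = 0 ∧ (v = y t ∨ v = y (t + 1)) then (1:ℕ) else 0 := by
      rw [Finset.card_filter, ← Fin.sum_univ_eq_sum_range]
      refine Finset.sum_congr rfl fun t _ => ?_
      rw [(hcast t).1, (hcast t).2]
    have c1 : (Finset.univ.filter fun t : Fin (2 * s) =>
          t.val % 2 = 1 ∧ (v = x t.castSucc ∨ v = x t.succ)).card
        = ∑ t ∈ Finset.range (2 * s),
            if t % 2 = 1 ∧ (v = y t ∨ v = y (t + 1)) then (1:ℕ) else 0 := by
      rw [Finset.card_filter, ← Fin.sum_univ_eq_sum_range]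
      refine Finset.sum_congr rfl fun t _ => ?_
      rw [(hcast t).1, (hcast t).2]
    rw [c0, c1]
    exact key y v s hne
  have h0 : y 0 = x ⟨0, by omega⟩ := hyx 0 (by omega)
  have h2s : y (2 * s) = x ⟨2 * s, by omega⟩ := hyx (2 * s) (by omega)
  constructor
  · intro hxx v
    have hv := hcards v
    have hyy : y 0 = y (2 * s) := by rw [h0, h2s]; exact hxx
    rw [← hyy] at hv
    exact Nat.add_right_cancel hv
  · intro h
    have hv := hcards (y 0)
    have hAB := h (y 0)
    rw [← h0, ← h2s]
    by_cases hc : (y 0 : V) = y (2 * s)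
    · exact hc
    · exfalso
      simp [hc] at hv
      omega
end

section
/- Let G be a simple graph with edges e_1,…,e_q and let e_{i_1}, …, e_{i_{2s}} (s ≥ 2) be a sequence of edges of G such that the subgraph spanned by these edges is connected and {i_1,i_3,…,i_{2s−1}} ∩ {i_2,i_4,…,i_{2s}} = ∅. Set α = (i_1,i_3,…,i_{2s−1}) and β = (i_2,i_4,…,i_{2s}). Then C_{α,β} = e_{i_1},…,e_{i_{2s}} is a simplicial even walk if and only if deg_α(x) = deg_β(x) for every vertex x of C_{α,β}, i.e., the sets {x : deg_α(x) > deg_β(x)} and {x : deg_α(x) < deg_β(x)} are both empty. -/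
open Finset

/-- The vertex set of the even walk `C_{α,β}`. -/
def walkVerts {V : Type*} [DecidableEq V] {q s : ℕ} (F : Fin q → Finset V)
    (α β : Fin s → Fin q) : Finset V :=
  Finset.univ.biUnion fun t : Fin s => F (α t) ∪ F (β t)

/-- Two vertices are adjacent in (the graph formed by the facets of) `C_{α,β}`. -/
def walkAdj {V : Type*} [DecidableEq V] {q s : ℕ} (F : Fin q → Finset V)
    (α β : Fin s → Fin q) (u v : V) : Prop :=
  u ≠ v ∧ ∃ t : Fin s,
    (u ∈ F (α t) ∧ v ∈ F (α t)) ∨ (u ∈ F (β t) ∧ v ∈ F (β t))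

lemma walk_aux {V : Type*} [DecidableEq V] {q s : ℕ} (e : Fin q → Finset V)
    (hcard : ∀ i, (e i).card = 2) {α β : Fin s → Fin q}
    (hcond : ∀ i ∈ Set.range α, ∀ j ∈ Set.range β,
      ¬ (↑(e i \ e j) ⊆ {x : V | walkDeg e β x < walkDeg e α x}))
    (x : V) : walkDeg e α x ≤ walkDeg e β x := by
  by_contra hlt
  push_neg at hlt
  have hx : ∃ t : Fin s, x ∈ e (α t) := by
    by_contra h
    push_neg at h
    have h0 : walkDeg e α x = 0 := by
      unfold walkDeg
      rw [Finset.card_eq_zero, Finset.filter_eq_empty_iff]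
      exact fun t _ => h t
    omega
  obtain ⟨t, hxt⟩ := hx
  obtain ⟨a, b, hab, hEq⟩ := Finset.card_eq_two.mp (hcard (α t))
  have hv : ∃ v, v ≠ x ∧ e (α t) = {x, v} := by
    rw [hEq] at hxt
    rcases Finset.mem_insert.mp hxt with h | h
    · subst h
      exact ⟨b, fun hb => hab hb.symm, hEq⟩
    · have h' := Finset.mem_singleton.mp h
      subst h'
      exact ⟨a, hab, by rw [hEq, Finset.pair_comm]⟩
  obtain ⟨v, hvx, hev⟩ := hv
  have key : ∀ t' : Fin s, v ∉ e (β t') ∧ walkDeg e α v ≤ walkDeg e β v := by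
    intro t'
    have h := hcond (α t) ⟨t, rfl⟩ (β t') ⟨t', rfl⟩
    rw [Set.not_subset] at h
    obtain ⟨w, hw1, hw2⟩ := h
    simp only [Finset.coe_sdiff, Set.mem_diff, Finset.mem_coe] at hw1
    simp only [Set.mem_setOf_eq, not_lt] at hw2
    have hw : w = x ∨ w = v := by
      have h2 := hw1.1
      rw [hev] at h2
      simpa using h2
    rcases hw with rfl | rfl
    · omega
    · exact ⟨hw1.2, hw2⟩
  have hβv : walkDeg e β v = 0 := by
    unfold walkDeg
    rw [Finset.card_eq_zero, Finset.filter_eq_empty_iff]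
    exact fun t' _ => (key t').1
  have hαv : 1 ≤ walkDeg e α v := by
    have ht : t ∈ Finset.univ.filter fun t : Fin s => v ∈ e (α t) := by
      simp [hev]
    exact Finset.card_pos.mpr ⟨t, ht⟩
  have := (key t).2
  omega

theorem stmt8 {V : Type*} [DecidableEq V] {q s : ℕ} (e : Fin q → Finset V)
    (hcard : ∀ i, (e i).card = 2) (hinj : Function.Injective e)
    (α β : Fin s → Fin q) (hs : 2 ≤ s)
    (hdisj : Disjoint (Set.range α) (Set.range β))
    (hconn : ∀ u v : V, u ∈ walkVerts e α β → v ∈ walkVerts e α β →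
        Relation.ReflTransGen (walkAdj e α β) u v) :
    IsEvenWalk e α β ↔ ∀ x : V, walkDeg e α x = walkDeg e β x := by
  constructor
  · rintro ⟨-, -, hcond⟩ x
    have h1 := walk_aux e hcard (α := α) (β := β)
      (fun i hi j hj => (hcond i hi j hj).1) x
    have h2 := walk_aux e hcard (α := β) (β := α)
      (fun i hi j hj => (hcond j hj i hi).2) x
    omega
  · intro h
    refine ⟨hs, hdisj, ?_⟩
    rintro i ⟨t, rfl⟩ j ⟨t', rfl⟩
    have hne : e (α t) ≠ e (β t') := by
      intro hEq
      exact (Set.disjoint_left.mp hdisj ⟨t, rfl⟩) ⟨t', (hinj hEq).symm⟩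
    constructor
    · intro hsub
      obtain ⟨w, hw⟩ : (e (α t) \ e (β t')).Nonempty := by
        rw [Finset.sdiff_nonempty]
        intro hle
        exact hne (Finset.eq_of_subset_of_card_le hle (by rw [hcard, hcard]))
      have hw2 := hsub (Finset.mem_coe.mpr hw)
      simp only [Set.mem_setOf_eq] at hw2
      have := h w
      omega
    · intro hsub
      obtain ⟨w, hw⟩ : (e (β t') \ e (α t)).Nonempty := by
        rw [Finset.sdiff_nonempty]
        intro hle
        exact hne.symm (Finset.eq_of_subset_of_card_le hle (by rw [hcard, hcard]))
      have hw2 := hsub (Finset.mem_coe.mpr hw)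
      simp only [Set.mem_setOf_eq] at hw2
      have := h w
      omega
end

section
/- Let Δ = ⟨F_1,…,F_q⟩ be a simplicial complex with facet ideal I = (f_1,…,f_q) in R = K[x_1,…,x_n], let s ≥ 2, and let α, β be tuples of length s in {1,…,q} with disjoint supports. If C_{α,β} is not a simplicial even walk, then T_{α,β} ∈ J_1·S + J_{s−1}·S, where S = R[T_1,…,T_q]. -/
open Finset MvPolynomial

/-- The squarefree monomial `f_i = ∏_{x ∈ F_i} x` of a facet `F_i`. -/
noncomputable def facetMonomial (K : Type*) [Field K] {n q : ℕ}
    (F : Fin q → Finset (Fin n)) (i : Fin q) : MvPolynomial (Fin n) K :=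
  ∏ x ∈ F i, X x

/-- The `R`-algebra map `ψ : S = R[T_1,…,T_q] → R[t]`, `T_i ↦ f_i·t`. -/
noncomputable def reesHom (K : Type*) [Field K] {n q : ℕ} (F : Fin q → Finset (Fin n)) :
    MvPolynomial (Fin q) (MvPolynomial (Fin n) K) →ₐ[MvPolynomial (Fin n) K]
      Polynomial (MvPolynomial (Fin n) K) :=
  aeval fun i : Fin q => Polynomial.C (facetMonomial K F i) * Polynomial.X

/-- The defining ideal `J = ker ψ` of the Rees algebra `R[It]`. -/
noncomputable def reesIdeal (K : Type*) [Field K] {n q : ℕ} (F : Fin q → Finset (Fin n)) :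
    Ideal (MvPolynomial (Fin q) (MvPolynomial (Fin n) K)) :=
  RingHom.ker (reesHom K F)

/-- The ideal generated by the facet monomials is of linear type: its Rees ideal `J`
is generated by its elements that are homogeneous of degree `1` in `T_1,…,T_q`. -/
def IsLinearType (K : Type*) [Field K] {n q : ℕ} (F : Fin q → Finset (Fin n)) : Prop :=
  reesIdeal K F = Ideal.span {g | g ∈ reesIdeal K F ∧ g.IsHomogeneous 1}

/-- The Taylor binomial `T_{α,β} = (lcm(f_α,f_β)/f_α)·T_α - (lcm(f_α,f_β)/f_β)·T_β`
for the squarefree monomials `f_i = ∏_{x ∈ F_i} x`: the exponent of `x` in `f_α` is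
`walkDeg F α x`, so `lcm(f_α,f_β)/f_α` has exponent vector
`x ↦ walkDeg F β x - walkDeg F α x` (truncated subtraction). -/
noncomputable def Tsf (K : Type*) [Field K] {n q s : ℕ} (F : Fin q → Finset (Fin n))
    (α β : Fin s → Fin q) : MvPolynomial (Fin q) (MvPolynomial (Fin n) K) :=
  C (monomial (Finsupp.equivFunOnFinite.symm
        fun x : Fin n => walkDeg F β x - walkDeg F α x) (1 : K)) * ∏ t, X (α t) -
  C (monomial (Finsupp.equivFunOnFinite.symm
        fun x : Fin n => walkDeg F α x - walkDeg F β x) (1 : K)) * ∏ t, X (β t)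


lemma expv_add {n : ℕ} (v w : Fin n → ℕ) :
    Finsupp.equivFunOnFinite.symm v + Finsupp.equivFunOnFinite.symm w
      = Finsupp.equivFunOnFinite.symm (fun x : Fin n => v x + w x) := by
  ext x; simp

noncomputable def expM (K : Type*) [Field K] {n q : ℕ} (v : Fin n → ℕ) :
    MvPolynomial (Fin q) (MvPolynomial (Fin n) K) :=
  C (monomial (Finsupp.equivFunOnFinite.symm v) (1 : K))

lemma expM_mul {K : Type*} [Field K] {n q : ℕ} (v w : Fin n → ℕ) :
    (expM K v : MvPolynomial (Fin q) (MvPolynomial (Fin n) K)) * expM K w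
      = expM K (fun x => v x + w x) := by
  simp only [expM, ← map_mul, monomial_mul, one_mul, expv_add]

lemma prod_X_eq {K : Type*} [Field K] {n : ℕ} (A : Finset (Fin n)) :
    (∏ x ∈ A, X x : MvPolynomial (Fin n) K) =
      monomial (Finsupp.equivFunOnFinite.symm fun x => if x ∈ A then 1 else 0) 1 := by
  induction A using Finset.induction with
  | empty =>
    have h0 : (Finsupp.equivFunOnFinite.symm fun _ : Fin n => (0:ℕ)) = 0 := by
      ext x; simp
    simp [h0, monomial_zero']
  | @insert a A ha ih =>
    have key : Finsupp.single a 1 + (Finsupp.equivFunOnFinite.symm fun x => if x ∈ A then 1 else 0)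
        = Finsupp.equivFunOnFinite.symm fun x : Fin n => if x ∈ insert a A then 1 else 0 := by
      ext x
      rcases eq_or_ne x a with rfl | hx <;>
        simp_all [Finsupp.single_apply, eq_comm (a := x)]
    rw [Finset.prod_insert ha, ih, X, monomial_mul, one_mul, key]

lemma walkDeg_split {V : Type*} [DecidableEq V] {q s' : ℕ} (F : Fin q → Finset V)
    (α : Fin (s' + 1) → Fin q) (t₀ : Fin (s' + 1)) (x : V) :
    walkDeg F α x = (if x ∈ F (α t₀) then 1 else 0)
      + walkDeg F (fun t => α (t₀.succAbove t)) x := by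
  unfold walkDeg
  rw [Finset.card_filter, Finset.card_filter]
  exact Fin.sum_univ_succAbove (fun t => if x ∈ F (α t) then 1 else 0) t₀

lemma Tsf_eq {K : Type*} [Field K] {n q s : ℕ} (F : Fin q → Finset (Fin n))
    (α β : Fin s → Fin q) :
    Tsf K F α β = expM K (fun x => walkDeg F β x - walkDeg F α x) * ∏ t, X (α t)
      - expM K (fun x => walkDeg F α x - walkDeg F β x) * ∏ t, X (β t) := rfl

lemma case_lemma {K : Type*} [Field K] {n q s' : ℕ} (F : Fin q → Finset (Fin n))
    (α β : Fin (s' + 1) → Fin q) (hdisj : Disjoint (Set.range α) (Set.range β))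
    (t₀ u₀ : Fin (s' + 1))
    (H : ↑(F (β u₀) \ F (α t₀)) ⊆ {x : Fin n | walkDeg F α x < walkDeg F β x}) :
    Tsf K F α β ∈ Ideal.span
      ({g | g ∈ reesIdeal K F ∧ g.IsHomogeneous 1} ∪
        {p | ∃ α' β' : Fin s' → Fin q,
          Disjoint (Set.range α') (Set.range β') ∧ p = Tsf K F α' β'}) := by
  classical
  set i := α t₀ with hi
  set j := β u₀ with hj
  set α' : Fin s' → Fin q := fun t => α (t₀.succAbove t) with hα'
  set β' : Fin s' → Fin q := fun t => β (u₀.succAbove t) with hβ'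
  have hA : ∀ x, walkDeg F α x = (if x ∈ F i then 1 else 0) + walkDeg F α' x :=
    fun x => walkDeg_split F α t₀ x
  have hB : ∀ x, walkDeg F β x = (if x ∈ F j then 1 else 0) + walkDeg F β' x :=
    fun x => walkDeg_split F β u₀ x
  have hH : ∀ x, x ∈ F j → x ∉ F i → walkDeg F α x < walkDeg F β x := by
    intro x h1 h2
    exact H (by simp [Finset.mem_sdiff, h1, h2])
  set vi : Fin n → ℕ := fun x => (if x ∈ F j then 1 else 0) - (if x ∈ F i then 1 else 0)
    with hvi
  set vj : Fin n → ℕ := fun x => (if x ∈ F i then 1 else 0) - (if x ∈ F j then 1 else 0)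
    with hvj
  set g : Fin n → ℕ := fun x => (walkDeg F β x - walkDeg F α x) - vi x with hg
  set h : Fin n → ℕ := fun x =>
    (walkDeg F α x - walkDeg F β x) - (walkDeg F α' x - walkDeg F β' x) with hh
  -- pointwise facts
  have pt : ∀ x : Fin n,
      (g x + vi x = walkDeg F β x - walkDeg F α x) ∧
      (h x + (walkDeg F β' x - walkDeg F α' x) = g x + vj x) ∧
      (h x + (walkDeg F α' x - walkDeg F β' x) = walkDeg F α x - walkDeg F β x) ∧
      (vi x + (if x ∈ F i then 1 else 0) = vj x + (if x ∈ F j then 1 else 0)) := by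
    intro x
    have h1 := hA x
    have h2 := hB x
    have h3 := hH x
    simp only [hg, hvi, hvj, hh]
    by_cases c1 : x ∈ F i <;> by_cases c2 : x ∈ F j
    · simp only [c1, c2, if_true] at h1 h2 ⊢
      refine ⟨?_, ?_, ?_, ?_⟩ <;> first | exact trivial | omega
    · simp only [c1, c2, if_true, if_false] at h1 h2 ⊢
      refine ⟨?_, ?_, ?_, ?_⟩ <;> first | exact trivial | omega
    · have h4 := h3 c2 c1
      simp only [c1, c2, if_true, if_false] at h1 h2 ⊢
      refine ⟨?_, ?_, ?_, ?_⟩ <;> first | exact trivial | omega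
    · simp only [c1, c2, if_false] at h1 h2 ⊢
      refine ⟨?_, ?_, ?_, ?_⟩ <;> first | exact trivial | omega
  have E1 : (expM K g : MvPolynomial (Fin q) (MvPolynomial (Fin n) K)) * expM K vi
      = expM K (fun x => walkDeg F β x - walkDeg F α x) := by
    rw [expM_mul]; congr 1; funext x; exact (pt x).1
  have E2 : (expM K h : MvPolynomial (Fin q) (MvPolynomial (Fin n) K))
      * expM K (fun x => walkDeg F β' x - walkDeg F α' x) = expM K g * expM K vj := by
    rw [expM_mul, expM_mul]; congr 1; funext x; exact (pt x).2.1
  have E3 : (expM K h : MvPolynomial (Fin q) (MvPolynomial (Fin n) K))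
      * expM K (fun x => walkDeg F α' x - walkDeg F β' x)
      = expM K (fun x => walkDeg F α x - walkDeg F β x) := by
    rw [expM_mul]; congr 1; funext x; exact (pt x).2.2.1
  set L : MvPolynomial (Fin q) (MvPolynomial (Fin n) K) :=
    expM K vi * X i - expM K vj * X j with hL
  have hLker : L ∈ reesIdeal K F := by
    have hfm : ∀ k : Fin q, facetMonomial K F k
        = monomial (Finsupp.equivFunOnFinite.symm fun x => if x ∈ F k then 1 else 0) 1 :=
      fun k => prod_X_eq _
    simp only [reesIdeal, RingHom.mem_ker, hL, expM, map_sub, map_mul,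
      AlgHom.coe_coe, reesHom, aeval_C, aeval_X, Polynomial.algebraMap_eq]
    rw [hfm i, hfm j]
    rw [← mul_assoc, ← mul_assoc, ← Polynomial.C_mul, ← Polynomial.C_mul,
      monomial_mul, monomial_mul, mul_one, expv_add, expv_add]
    have e : (fun x => vi x + if x ∈ F i then 1 else 0)
        = (fun x => vj x + if x ∈ F j then 1 else 0) := by
      funext x; exact (pt x).2.2.2
    rw [e, sub_self]
  have hLhom : L.IsHomogeneous 1 :=
    (isHomogeneous_C_mul_X _ _).sub (isHomogeneous_C_mul_X _ _)
  have hsplitα : (∏ t, X (α t) : MvPolynomial (Fin q) (MvPolynomial (Fin n) K))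
      = X i * ∏ t, X (α' t) := Fin.prod_univ_succAbove (fun t => X (α t)) t₀
  have hsplitβ : (∏ t, X (β t) : MvPolynomial (Fin q) (MvPolynomial (Fin n) K))
      = X j * ∏ t, X (β' t) := Fin.prod_univ_succAbove (fun t => X (β t)) u₀
  have key : Tsf K F α β = (expM K g * ∏ t, X (α' t)) * L
      + (expM K h * X j) * Tsf K F α' β' := by
    rw [Tsf_eq, Tsf_eq, hsplitα, hsplitβ, hL]
    linear_combination (-(X i * ∏ t, X (α' t))) * E1 - (X j * ∏ t, X (α' t)) * E2
      + (X j * ∏ t, X (β' t)) * E3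
  rw [key]
  refine Ideal.add_mem _
    (Ideal.mul_mem_left _ _ (Ideal.subset_span (Or.inl ⟨hLker, hLhom⟩)))
    (Ideal.mul_mem_left _ _ (Ideal.subset_span (Or.inr ⟨α', β', ?_, rfl⟩)))
  exact hdisj.mono (Set.range_comp_subset_range _ α) (Set.range_comp_subset_range _ β)

theorem stmt13 {K : Type*} [Field K] {n q s : ℕ} (hs : 2 ≤ s)
    (F : Fin q → Finset (Fin n)) (hF : IsFacetFamily F)
    (α β : Fin s → Fin q) (hdisj : Disjoint (Set.range α) (Set.range β))
    (hnw : ¬ IsEvenWalk F α β) :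
    Tsf K F α β ∈ Ideal.span
      ({g | g ∈ reesIdeal K F ∧ g.IsHomogeneous 1} ∪
        {p | ∃ α' β' : Fin (s - 1) → Fin q,
          Disjoint (Set.range α') (Set.range β') ∧ p = Tsf K F α' β'}) := by
  obtain ⟨s', rfl⟩ : ∃ s', s = s' + 1 := ⟨s - 1, by omega⟩
  have h3 : ¬ ∀ i ∈ Set.range α, ∀ j ∈ Set.range β,
      ¬ (↑(F i \ F j) ⊆ {x : Fin n | walkDeg F β x < walkDeg F α x}) ∧
      ¬ (↑(F j \ F i) ⊆ {x : Fin n | walkDeg F α x < walkDeg F β x}) :=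
    fun h => hnw ⟨hs, hdisj, h⟩
  push_neg at h3
  obtain ⟨i, ⟨t₀, rfl⟩, j, ⟨u₀, rfl⟩, hpq⟩ := h3
  by_cases hP : ↑(F (α t₀) \ F (β u₀)) ⊆ {x : Fin n | walkDeg F β x < walkDeg F α x}
  · have hm := case_lemma (K := K) F β α hdisj.symm u₀ t₀ hP
    have hneg : Tsf K F α β = - Tsf K F β α := by unfold Tsf; ring
    rw [hneg]
    exact neg_mem hm
  · exact case_lemma F α β hdisj t₀ u₀ (hpq hP)
end

section
/- Let Δ = ⟨F_1,…,F_q⟩ be a simplicial complex with facet ideal I = (f_1,…,f_q) in R = K[x_1,…,x_n], and let J ⊆ S = R[T_1,…,T_q] be the defining ideal of the Rees algebra of I. Then J = J_1·S + (⋃_{i≥2} P_i)·S, where P_i = {T_{α,β} : α, β tuples of length i with disjoint supports such that C_{α,β} is a simplicial even walk}. -/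
open Finset MvPolynomial

namespace Stmt14Aux

@[simp] lemma ef_apply {n : ℕ} (f : Fin n → ℕ) (x : Fin n) :
    (Finsupp.equivFunOnFinite.symm f) x = f x := rfl

variable {K : Type*} [Field K] {n q : ℕ}

/-- exponent Finsupp of a walk -/
noncomputable def wd (F : Fin q → Finset (Fin n)) {s : ℕ} (α : Fin s → Fin q) : Fin n →₀ ℕ :=
  Finsupp.equivFunOnFinite.symm (walkDeg F α)

lemma walkDeg_eq_sum (F : Fin q → Finset (Fin n)) {s : ℕ} (α : Fin s → Fin q) (x : Fin n) :
    walkDeg F α x = ∑ t : Fin s, if x ∈ F (α t) then 1 else 0 := by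
  rw [walkDeg, Finset.card_filter]

lemma monomial_prod {ι : Type*} (s : Finset ι) (g : ι → (Fin n →₀ ℕ)) :
    ∏ i ∈ s, (monomial (g i) (1 : K)) = monomial (∑ i ∈ s, g i) 1 := by
  classical
  induction s using Finset.cons_induction with
  | empty => simp
  | cons a s ha ih => rw [Finset.prod_cons, Finset.sum_cons, ih, monomial_mul, one_mul]

lemma facetMonomial_eq (F : Fin q → Finset (Fin n)) (i : Fin q) :
    facetMonomial K F i = monomial (∑ x ∈ F i, Finsupp.single x 1) 1 := by
  rw [facetMonomial, ← monomial_prod]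
  rfl

lemma prodFacet (F : Fin q → Finset (Fin n)) {s : ℕ} (α : Fin s → Fin q) :
    ∏ t : Fin s, facetMonomial K F (α t) = monomial (wd F α) 1 := by
  classical
  simp only [facetMonomial_eq]
  rw [monomial_prod]
  have : (∑ t : Fin s, ∑ x ∈ F (α t), Finsupp.single x 1) = wd F α := by
    ext x
    rw [Finsupp.finset_sum_apply, wd, ef_apply, walkDeg_eq_sum]
    refine Finset.sum_congr rfl fun t _ => ?_
    rw [Finsupp.finset_sum_apply]
    simp [Finsupp.single_apply, eq_comm]
  rw [this]

lemma reesHom_prodX (F : Fin q → Finset (Fin n)) {s : ℕ} (α : Fin s → Fin q) :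
    reesHom K F (∏ t : Fin s, X (α t)) =
      Polynomial.C (monomial (wd F α) (1 : K)) * Polynomial.X ^ s := by
  rw [map_prod]
  simp only [reesHom, aeval_X]
  rw [Finset.prod_mul_distrib, ← map_prod, prodFacet, Finset.prod_const, Finset.card_univ,
    Fintype.card_fin]

lemma TsfKer (F : Fin q → Finset (Fin n)) {s : ℕ} (α β : Fin s → Fin q) :
    Tsf K F α β ∈ reesIdeal K F := by
  have hC : ∀ r : MvPolynomial (Fin n) K,
      reesHom K F (C r) = Polynomial.C r := fun r => by
    simpa using (reesHom K F).commutes r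
  simp only [reesIdeal, RingHom.mem_ker, Tsf, map_sub, map_mul, hC, reesHom_prodX]
  have : Polynomial.C (monomial (Finsupp.equivFunOnFinite.symm
        fun x : Fin n => walkDeg F β x - walkDeg F α x) (1:K)) * Polynomial.C (monomial (wd F α) (1:K))
      = Polynomial.C (monomial (Finsupp.equivFunOnFinite.symm
        fun x : Fin n => walkDeg F α x - walkDeg F β x) (1:K)) * Polynomial.C (monomial (wd F β) (1:K)) := by
    rw [← map_mul, ← map_mul, monomial_mul, monomial_mul, one_mul]
    have h : ((Finsupp.equivFunOnFinite.symm
        fun x : Fin n => walkDeg F β x - walkDeg F α x) + wd F α)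
        = ((Finsupp.equivFunOnFinite.symm
        fun x : Fin n => walkDeg F α x - walkDeg F β x) + wd F β) := by
      ext x
      simp only [Finsupp.add_apply, wd, ef_apply]
      omega
    rw [h]
  rw [← mul_assoc, ← mul_assoc, this, sub_self]

end Stmt14Aux
namespace Stmt14Aux
variable {K : Type*} [Field K] {n q : ℕ}

/-- shorthand for the coefficient `C (monomial f 1)` -/
noncomputable def Cm (K : Type*) [Field K] {n : ℕ} (q : ℕ) (f : Fin n → ℕ) :
    MvPolynomial (Fin q) (MvPolynomial (Fin n) K) :=
  C (monomial (Finsupp.equivFunOnFinite.symm f) (1 : K))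

lemma Cm_mul (f g : Fin n → ℕ) :
    Cm K q f * Cm K q g = Cm K q (fun x => f x + g x) := by
  have h : Finsupp.equivFunOnFinite.symm f + Finsupp.equivFunOnFinite.symm g
      = Finsupp.equivFunOnFinite.symm (fun x => f x + g x) := by
    ext x
    simp [Finsupp.add_apply]
  rw [Cm, Cm, Cm, ← map_mul, monomial_mul, one_mul, h]

lemma Tsf_eq (F : Fin q → Finset (Fin n)) {s : ℕ} (α β : Fin s → Fin q) :
    Tsf K F α β = Cm K q (fun x => walkDeg F β x - walkDeg F α x) * ∏ t, X (α t) -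
      Cm K q (fun x => walkDeg F α x - walkDeg F β x) * ∏ t, X (β t) := rfl

lemma walkDeg_succAbove (F : Fin q → Finset (Fin n)) {m : ℕ} (α : Fin (m+1) → Fin q)
    (t : Fin (m+1)) (x : Fin n) :
    walkDeg F α x = (if x ∈ F (α t) then 1 else 0) +
      walkDeg F (fun u => α (t.succAbove u)) x := by
  rw [walkDeg_eq_sum, walkDeg_eq_sum,
    Fin.sum_univ_succAbove (fun u => if x ∈ F (α u) then 1 else 0) t]

lemma Tsf_del (F : Fin q → Finset (Fin n)) {m : ℕ} (α β : Fin (m+1) → Fin q)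
    (t t' : Fin (m+1)) (h : α t = β t') :
    Tsf K F α β = X (α t) *
      Tsf K F (fun u => α (t.succAbove u)) (fun u => β (t'.succAbove u)) := by
  rw [Tsf_eq, Tsf_eq]
  have h1 : (fun x => walkDeg F β x - walkDeg F α x) =
      fun x => walkDeg F (fun u => β (t'.succAbove u)) x -
        walkDeg F (fun u => α (t.succAbove u)) x := by
    funext x
    rw [walkDeg_succAbove F α t, walkDeg_succAbove F β t', h, Nat.add_sub_add_left]
  have h2 : (fun x => walkDeg F α x - walkDeg F β x) =
      fun x => walkDeg F (fun u => α (t.succAbove u)) x -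
        walkDeg F (fun u => β (t'.succAbove u)) x := by
    funext x
    rw [walkDeg_succAbove F α t, walkDeg_succAbove F β t', h, Nat.add_sub_add_left]
  rw [h1, h2, Fin.prod_univ_succAbove (fun u => X (α u)) t,
    Fin.prod_univ_succAbove (fun u => X (β u)) t', h]
  ring

lemma walkDeg_one (F : Fin q → Finset (Fin n)) (k : Fin q) (x : Fin n) :
    walkDeg F (fun _ : Fin 1 => k) x = if x ∈ F k then 1 else 0 := by
  rw [walkDeg_eq_sum]
  simp

lemma Tsf_single_diff (F : Fin q → Finset (Fin n)) {s : ℕ} (γ δ : Fin s → Fin q)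
    (t₀ : Fin s) (h : ∀ t, t ≠ t₀ → γ t = δ t) :
    Tsf K F γ δ = (∏ t ∈ Finset.univ.erase t₀, X (γ t)) *
      Tsf K F (fun _ : Fin 1 => γ t₀) (fun _ : Fin 1 => δ t₀) := by
  classical
  have hsum : ∀ x, ∑ t ∈ Finset.univ.erase t₀, (if x ∈ F (γ t) then 1 else 0) =
      ∑ t ∈ Finset.univ.erase t₀, (if x ∈ F (δ t) then 1 else 0) := fun x =>
    Finset.sum_congr rfl fun t ht => by rw [h t (Finset.ne_of_mem_erase ht)]
  have hγ : ∀ x, walkDeg F γ x = (if x ∈ F (γ t₀) then 1 else 0) +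
      ∑ t ∈ Finset.univ.erase t₀, (if x ∈ F (γ t) then 1 else 0) := fun x => by
    rw [walkDeg_eq_sum, ← Finset.add_sum_erase _ _ (Finset.mem_univ t₀)]
  have hδ : ∀ x, walkDeg F δ x = (if x ∈ F (δ t₀) then 1 else 0) +
      ∑ t ∈ Finset.univ.erase t₀, (if x ∈ F (γ t) then 1 else 0) := fun x => by
    rw [walkDeg_eq_sum, ← Finset.add_sum_erase _ _ (Finset.mem_univ t₀), hsum x]
  rw [Tsf_eq, Tsf_eq]
  have h1 : (fun x => walkDeg F δ x - walkDeg F γ x) =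
      fun x => walkDeg F (fun _ : Fin 1 => δ t₀) x - walkDeg F (fun _ : Fin 1 => γ t₀) x := by
    funext x
    rw [hγ x, hδ x, Nat.add_sub_add_right, walkDeg_one, walkDeg_one]
  have h2 : (fun x => walkDeg F γ x - walkDeg F δ x) =
      fun x => walkDeg F (fun _ : Fin 1 => γ t₀) x - walkDeg F (fun _ : Fin 1 => δ t₀) x := by
    funext x
    rw [hγ x, hδ x, Nat.add_sub_add_right, walkDeg_one, walkDeg_one]
  have hpγ : ∏ t, X (γ t) = X (γ t₀) * ∏ t ∈ Finset.univ.erase t₀,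
      (X (γ t) : MvPolynomial (Fin q) (MvPolynomial (Fin n) K)) :=
    (Finset.mul_prod_erase _ _ (Finset.mem_univ t₀)).symm
  have hpδ : ∏ t, X (δ t) = X (δ t₀) * ∏ t ∈ Finset.univ.erase t₀,
      (X (γ t) : MvPolynomial (Fin q) (MvPolynomial (Fin n) K)) := by
    rw [← Finset.mul_prod_erase _ _ (Finset.mem_univ t₀)]
    exact congrArg _ (Finset.prod_congr rfl fun t ht => by
      rw [h t (Finset.ne_of_mem_erase ht)])
  rw [h1, h2, hpγ, hpδ]
  simp only [Fin.prod_univ_one]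
  ring

/-- The three-term splitting identity. -/
lemma Tsf_split (F : Fin q → Finset (Fin n)) {s : ℕ} (α β μ : Fin s → Fin q)
    (hw : ∀ x, walkDeg F μ x ≤ max (walkDeg F α x) (walkDeg F β x)) :
    Tsf K F α β =
      Cm K q (fun x => max (walkDeg F α x) (walkDeg F β x)
          - max (walkDeg F α x) (walkDeg F μ x)) * Tsf K F α μ +
      Cm K q (fun x => max (walkDeg F α x) (walkDeg F β x)
          - max (walkDeg F μ x) (walkDeg F β x)) * Tsf K F μ β := by
  set a := walkDeg F α
  set b := walkDeg F β
  set w := walkDeg F μ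
  rw [Tsf_eq, Tsf_eq, Tsf_eq]
  have e1 : Cm K q (fun x => max (a x) (b x) - max (a x) (w x)) *
      Cm K q (fun x => w x - a x) = Cm K q (fun x => b x - a x) := by
    rw [Cm_mul]
    congr 1
    funext x
    have := hw x
    omega
  have e2 : Cm K q (fun x => max (a x) (b x) - max (a x) (w x)) *
      Cm K q (fun x => a x - w x) =
      Cm K q (fun x => max (a x) (b x) - max (w x) (b x)) *
      Cm K q (fun x => b x - w x) := by
    rw [Cm_mul, Cm_mul]
    congr 1
    funext x
    have := hw x
    omega
  have e3 : Cm K q (fun x => max (a x) (b x) - max (w x) (b x)) *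
      Cm K q (fun x => w x - b x) = Cm K q (fun x => a x - b x) := by
    rw [Cm_mul]
    congr 1
    funext x
    have := hw x
    omega
  calc Cm K q (fun x => b x - a x) * ∏ t, X (α t) -
        Cm K q (fun x => a x - b x) * ∏ t, X (β t)
      = (Cm K q (fun x => max (a x) (b x) - max (a x) (w x)) *
          Cm K q (fun x => w x - a x)) * ∏ t, X (α t) -
        (Cm K q (fun x => max (a x) (b x) - max (a x) (w x)) *
          Cm K q (fun x => a x - w x)) * ∏ t, X (μ t) +
        ((Cm K q (fun x => max (a x) (b x) - max (w x) (b x)) *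
          Cm K q (fun x => b x - w x)) * ∏ t, X (μ t) -
        (Cm K q (fun x => max (a x) (b x) - max (w x) (b x)) *
          Cm K q (fun x => w x - b x)) * ∏ t, X (β t)) := by
        rw [e1, e2, e3]; ring
    _ = _ := by ring

end Stmt14Aux
namespace Stmt14Aux
variable {K : Type*} [Field K] {n q : ℕ}

lemma walkDeg_update_le (F : Fin q → Finset (Fin n)) {s : ℕ} (γ : Fin s → Fin q)
    (t₀ : Fin s) (i : Fin q) (g : Fin n → ℕ)
    (h : ∀ x, x ∈ F i → x ∉ F (γ t₀) → walkDeg F γ x < g x) (x : Fin n) :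
    walkDeg F (Function.update γ t₀ i) x ≤ max (g x) (walkDeg F γ x) := by
  classical
  have hrest : ∑ t ∈ Finset.univ.erase t₀, (if x ∈ F (Function.update γ t₀ i t) then 1 else 0)
      = ∑ t ∈ Finset.univ.erase t₀, (if x ∈ F (γ t) then 1 else 0) :=
    Finset.sum_congr rfl fun t ht => by
      rw [Function.update_of_ne (Finset.ne_of_mem_erase ht)]
  have h1 : walkDeg F (Function.update γ t₀ i) x = (if x ∈ F i then 1 else 0) +
      ∑ t ∈ Finset.univ.erase t₀, (if x ∈ F (γ t) then 1 else 0) := by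
    rw [walkDeg_eq_sum, ← Finset.add_sum_erase _ _ (Finset.mem_univ t₀), hrest,
      Function.update_self]
  have h2 : walkDeg F γ x = (if x ∈ F (γ t₀) then 1 else 0) +
      ∑ t ∈ Finset.univ.erase t₀, (if x ∈ F (γ t) then 1 else 0) := by
    rw [walkDeg_eq_sum, ← Finset.add_sum_erase _ _ (Finset.mem_univ t₀)]
  by_cases hxi : x ∈ F i
  · by_cases hxj : x ∈ F (γ t₀)
    · simp only [hxi, hxj, if_true] at h1 h2
      omega
    · have := h x hxi hxj
      simp only [hxi, hxj, if_true, if_false] at h1 h2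
      omega
  · simp only [hxi, if_false] at h1
    omega

/-- The set on the right-hand side of the theorem. -/
def RHS (K : Type*) [Field K] {n q : ℕ} (F : Fin q → Finset (Fin n)) :
    Set (MvPolynomial (Fin q) (MvPolynomial (Fin n) K)) :=
  {g | g ∈ reesIdeal K F ∧ g.IsHomogeneous 1} ∪
    {p | ∃ (i : ℕ) (α β : Fin i → Fin q), IsEvenWalk F α β ∧ p = Tsf K F α β}

lemma TsfHom1 (F : Fin q → Finset (Fin n)) (α β : Fin 1 → Fin q) :
    Tsf K F α β ∈ Ideal.span (RHS K F) := by
  refine Ideal.subset_span (Or.inl ⟨TsfKer F α β, ?_⟩)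
  rw [Tsf_eq]
  simp only [Fin.prod_univ_one]
  have h1 : (Cm K q (fun x => walkDeg F β x - walkDeg F α x) * X (α 0)).IsHomogeneous 1 := by
    simpa [Cm] using (isHomogeneous_C _ _).mul (isHomogeneous_X _ (α 0))
  have h2 : (Cm K q (fun x => walkDeg F α x - walkDeg F β x) * X (β 0)).IsHomogeneous 1 := by
    simpa [Cm] using (isHomogeneous_C _ _).mul (isHomogeneous_X _ (β 0))
  exact h1.sub h2

lemma TsfMem (F : Fin q → Finset (Fin n)) (s : ℕ) (α β : Fin s → Fin q) :
    Tsf K F α β ∈ Ideal.span (RHS K F) := by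
  induction s using Nat.strong_induction_on with
  | _ s ih =>
  match s, α, β, ih with
  | 0, α, β, ih => ?_
  | 1, α, β, ih => ?_
  | (m+2), α, β, ih => ?_
  · -- s = 0 : Tsf = 0
    have hz : (Finsupp.equivFunOnFinite.symm fun _ : Fin n => (0:ℕ)) = 0 := by
      ext x; rfl
    have : Tsf K F α β = 0 := by
      rw [Tsf_eq]
      have hwd : ∀ (γ : Fin 0 → Fin q) (x : Fin n), walkDeg F γ x = 0 := by
        intro γ x; rw [walkDeg_eq_sum]; simp
      simp only [hwd, Cm, Nat.zero_sub, hz, monomial_zero', map_one]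
      simp
    rw [this]; exact Ideal.zero_mem _
  · exact TsfHom1 F α β
  · -- s = m + 2
    by_cases hdis : Disjoint (Set.range α) (Set.range β)
    · by_cases hew : ∀ i ∈ Set.range α, ∀ j ∈ Set.range β,
          ¬ (↑(F i \ F j) ⊆ {x : Fin n | walkDeg F β x < walkDeg F α x}) ∧
          ¬ (↑(F j \ F i) ⊆ {x : Fin n | walkDeg F α x < walkDeg F β x})
      · exact Ideal.subset_span (Or.inr ⟨m+2, α, β,
          ⟨by omega, hdis, hew⟩, rfl⟩)
      · push_neg at hew
        obtain ⟨i, hi, j, hj, hcase⟩ := hew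
        obtain ⟨ti, hti⟩ := hi
        obtain ⟨tj, htj⟩ := hj
        by_cases hA : (↑(F i \ F j) : Set (Fin n)) ⊆ {x : Fin n | walkDeg F β x < walkDeg F α x}
        · -- F i \ F j ⊆ {b < a} : use β' = update β tj i
          set β' := Function.update β tj i with hβ'
          have hw : ∀ x, walkDeg F β' x ≤ max (walkDeg F α x) (walkDeg F β x) := by
            intro x
            refine walkDeg_update_le F β tj i (walkDeg F α) (fun y hyi hyj => ?_) x
            have : y ∈ F i \ F j := Finset.mem_sdiff.2 ⟨hyi, by rwa [htj] at hyj⟩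
            exact hA this
          rw [Tsf_split F α β β' hw]
          refine Ideal.add_mem _ (Ideal.mul_mem_left _ _ ?_) (Ideal.mul_mem_left _ _ ?_)
          · -- Tsf α β' : common entry i = α ti = β' tj
            have hcom : α ti = β' tj := by rw [hβ', Function.update_self, hti]
            rw [Tsf_del F α β' ti tj hcom]
            exact Ideal.mul_mem_left _ _ (ih (m+1) (by omega) _ _)
          · -- Tsf β' β : differ only at tj
            rw [Tsf_single_diff F β' β tj
              (fun t ht => by rw [hβ', Function.update_of_ne ht])]
            exact Ideal.mul_mem_left _ _ (TsfHom1 F _ _)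
        · -- F j \ F i ⊆ {a < b} : use α' = update α ti j
          have hB := hcase hA
          set α' := Function.update α ti j with hα'
          have hw : ∀ x, walkDeg F α' x ≤ max (walkDeg F α x) (walkDeg F β x) := by
            intro x
            rw [max_comm]
            refine walkDeg_update_le F α ti j (walkDeg F β) (fun y hyj hyi => ?_) x
            have : y ∈ F j \ F i := Finset.mem_sdiff.2 ⟨hyj, by rwa [hti] at hyi⟩
            exact hB this
          rw [Tsf_split F α β α' hw]
          refine Ideal.add_mem _ (Ideal.mul_mem_left _ _ ?_) (Ideal.mul_mem_left _ _ ?_)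
          · -- Tsf α α' : differ only at ti
            rw [Tsf_single_diff F α α' ti
              (fun t ht => by rw [hα', Function.update_of_ne ht])]
            exact Ideal.mul_mem_left _ _ (TsfHom1 F _ _)
          · -- Tsf α' β : common entry j = α' ti = β tj
            have hcom : α' ti = β tj := by rw [hα', Function.update_self, htj]
            rw [Tsf_del F α' β ti tj hcom]
            exact Ideal.mul_mem_left _ _ (ih (m+1) (by omega) _ _)
    · -- not disjoint: common entry
      rw [Set.not_disjoint_iff] at hdis
      obtain ⟨k, ⟨ti, hti⟩, ⟨tj, htj⟩⟩ := hdis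
      have hcom : α ti = β tj := by rw [hti, htj]
      rw [Tsf_del F α β ti tj hcom]
      exact Ideal.mul_mem_left _ _ (ih (m+1) (by omega) _ _)

end Stmt14Aux
namespace Stmt14Aux
variable {K : Type*} [Field K] {n q : ℕ}

/-- exponent vector of `f^v = ∏ f_i^{v i}` -/
noncomputable def Av (F : Fin q → Finset (Fin n)) (v : Fin q →₀ ℕ) : Fin n →₀ ℕ :=
  Finsupp.equivFunOnFinite.symm (fun x => ∑ i : Fin q, v i * (if x ∈ F i then 1 else 0))

/-- total `T`-degree of `v` -/
def Dv {q : ℕ} (v : Fin q →₀ ℕ) : ℕ := ∑ i : Fin q, v i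

lemma monomial_univ (v : Fin q →₀ ℕ) :
    (monomial v (1 : MvPolynomial (Fin n) K)) = ∏ i : Fin q, X i ^ v i := by
  rw [← prod_X_pow_eq_monomial]
  exact Finset.prod_subset (Finset.subset_univ _) (fun i _ hi => by
    rw [Finsupp.notMem_support_iff.1 hi, pow_zero])

lemma reesHom_monomial (F : Fin q → Finset (Fin n)) (v : Fin q →₀ ℕ)
    (r : MvPolynomial (Fin n) K) :
    reesHom K F (monomial v r) =
      Polynomial.C (r * monomial (Av F v) (1 : K)) * Polynomial.X ^ Dv v := by
  have h1 : (monomial v r : MvPolynomial (Fin q) (MvPolynomial (Fin n) K))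
      = C r * monomial v 1 := by rw [C_mul_monomial, mul_one]
  have hC : ∀ r : MvPolynomial (Fin n) K,
      reesHom K F (C r) = Polynomial.C r := fun r => by
    simpa using (reesHom K F).commutes r
  rw [h1, map_mul, hC, monomial_univ, map_prod]
  simp only [map_pow, reesHom, aeval_X]
  have h2 : ∀ i : Fin q, (Polynomial.C (facetMonomial K F i) * Polynomial.X) ^ v i
      = Polynomial.C (facetMonomial K F i ^ v i) * Polynomial.X ^ v i := by
    intro i; rw [mul_pow, Polynomial.C_pow]
  rw [Finset.prod_congr rfl fun i _ => h2 i, Finset.prod_mul_distrib, ← map_prod,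
    Finset.prod_pow_eq_pow_sum]
  have h3 : ∏ i : Fin q, facetMonomial K F i ^ v i = monomial (Av F v) (1:K) := by
    have h4 : ∀ i : Fin q, facetMonomial K F i ^ v i
        = monomial (v i • ∑ x ∈ F i, Finsupp.single x 1) (1:K) := fun i => by
      rw [facetMonomial_eq, monomial_pow, one_pow]
    have h5 : (∑ i : Fin q, v i • ∑ x ∈ F i, Finsupp.single x 1) = Av F v := by
      ext y
      rw [Finsupp.finset_sum_apply]
      simp only [Av, ef_apply]
      refine Finset.sum_congr rfl fun i _ => ?_
      rw [Finsupp.smul_apply, Finsupp.finset_sum_apply, smul_eq_mul]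
      congr 1
      simp [Finsupp.single_apply, eq_comm]
    rw [Finset.prod_congr rfl fun i _ => h4 i, monomial_prod, h5]
  rw [h3, ← mul_assoc, ← map_mul]
  rfl

lemma reesHom_eq_sum (F : Fin q → Finset (Fin n))
    (g : MvPolynomial (Fin q) (MvPolynomial (Fin n) K)) :
    reesHom K F g = ∑ v ∈ g.support,
      Polynomial.C (coeff v g * monomial (Av F v) (1:K)) * Polynomial.X ^ Dv v := by
  conv_lhs => rw [← support_sum_monomial_coeff g]
  rw [map_sum]
  exact Finset.sum_congr rfl fun v _ => reesHom_monomial F v _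

lemma exists_pair (F : Fin q → Finset (Fin n))
    (g : MvPolynomial (Fin q) (MvPolynomial (Fin n) K)) (hg : reesHom K F g = 0)
    (v₀ : Fin q →₀ ℕ) (hv₀ : v₀ ∈ g.support) (u₀ : Fin n →₀ ℕ)
    (hu₀ : u₀ ∈ (coeff v₀ g).support) :
    ∃ v₁ ∈ g.support, v₁ ≠ v₀ ∧ Dv v₁ = Dv v₀ ∧ Av F v₁ ≤ u₀ + Av F v₀ ∧
      (u₀ + Av F v₀) - Av F v₁ ∈ (coeff v₁ g).support := by
  classical
  have hsum : ∑ v ∈ g.support, (if Dv v₀ = Dv v then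
      MvPolynomial.coeff (u₀ + Av F v₀) (coeff v g * monomial (Av F v) (1:K)) else 0) = 0 := by
    have h0 : (reesHom K F g).coeff (Dv v₀) = 0 := by rw [hg]; simp
    have h1 : (reesHom K F g).coeff (Dv v₀) = ∑ v ∈ g.support,
        (if Dv v₀ = Dv v then coeff v g * monomial (Av F v) (1:K) else 0) := by
      rw [reesHom_eq_sum, Polynomial.finset_sum_coeff]
      refine Finset.sum_congr rfl fun v _ => ?_
      rw [Polynomial.coeff_C_mul, Polynomial.coeff_X_pow, mul_ite, mul_one, mul_zero]
    have h2 := congrArg (MvPolynomial.coeff (u₀ + Av F v₀)) (h1.symm.trans h0)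
    rw [MvPolynomial.coeff_sum, MvPolynomial.coeff_zero] at h2
    refine Eq.trans (Finset.sum_congr rfl fun v _ => ?_) h2
    rw [apply_ite (MvPolynomial.coeff (u₀ + Av F v₀)), MvPolynomial.coeff_zero]
  have hT₀ : (if Dv v₀ = Dv v₀ then
      MvPolynomial.coeff (u₀ + Av F v₀) (coeff v₀ g * monomial (Av F v₀) (1:K)) else 0)
      = coeff u₀ (coeff v₀ g) := by
    rw [if_pos rfl, coeff_mul_monomial', if_pos le_add_self, mul_one, add_tsub_cancel_right]
  have hne : (if Dv v₀ = Dv v₀ then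
      MvPolynomial.coeff (u₀ + Av F v₀) (coeff v₀ g * monomial (Av F v₀) (1:K)) else 0) ≠ 0 := by
    rw [hT₀]; exact MvPolynomial.mem_support_iff.1 hu₀
  have herase : ∑ v ∈ g.support.erase v₀, (if Dv v₀ = Dv v then
      MvPolynomial.coeff (u₀ + Av F v₀) (coeff v g * monomial (Av F v) (1:K)) else 0) ≠ 0 := by
    rw [← Finset.add_sum_erase _ _ hv₀] at hsum
    intro hc
    rw [hc, add_zero] at hsum
    exact hne hsum
  obtain ⟨v₁, hv₁mem, hv₁⟩ := Finset.exists_ne_zero_of_sum_ne_zero herase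
  have hDv : Dv v₀ = Dv v₁ := by
    by_contra hc; rw [if_neg hc] at hv₁; exact hv₁ rfl
  rw [if_pos hDv, coeff_mul_monomial'] at hv₁
  have hle : Av F v₁ ≤ u₀ + Av F v₀ := by
    by_contra hc; rw [if_neg hc] at hv₁; exact hv₁ rfl
  rw [if_pos hle, mul_one] at hv₁
  exact ⟨v₁, Finset.mem_of_mem_erase hv₁mem, Finset.ne_of_mem_erase hv₁mem, hDv.symm, hle,
    MvPolynomial.mem_support_iff.2 hv₁⟩

end Stmt14Aux
namespace Stmt14Aux
variable {K : Type*} [Field K] {n q : ℕ}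

lemma exists_tuple (F : Fin q → Finset (Fin n)) :
    ∀ (d : ℕ) (v : Fin q →₀ ℕ), Dv v = d →
    ∃ α : Fin d → Fin q,
      (∀ x, walkDeg F α x = ∑ i : Fin q, v i * (if x ∈ F i then 1 else 0)) ∧
      (∏ t, (X (α t) : MvPolynomial (Fin q) (MvPolynomial (Fin n) K))) = monomial v 1 := by
  intro d
  induction d with
  | zero =>
    intro v hd
    have hv : ∀ i, v i = 0 := by
      intro i
      have := (Finset.sum_eq_zero_iff.1 hd) i (Finset.mem_univ i)
      exact this
    have hv0 : v = 0 := by ext i; exact hv i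
    refine ⟨Fin.elim0, fun x => ?_, ?_⟩
    · rw [walkDeg_eq_sum]
      simp [hv]
    · rw [hv0]
      simp [monomial_zero']
  | succ m ih =>
    intro v hd
    have hk : ∃ k, v k ≠ 0 := by
      by_contra hc
      push_neg at hc
      have : Dv v = 0 := Finset.sum_eq_zero fun i _ => hc i
      omega
    obtain ⟨k, hk⟩ := hk
    have hvk : 1 ≤ v k := Nat.one_le_iff_ne_zero.2 hk
    set v' := v - Finsupp.single k 1 with hv'def
    have hv' : ∀ i, v' i = v i - (if i = k then 1 else 0) := by
      intro i
      rw [hv'def, Finsupp.tsub_apply, Finsupp.single_apply]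
      by_cases h : i = k
      · subst h; simp
      · rw [if_neg h, if_neg (fun hh => h hh.symm)]
    have hveq : ∀ i, v i = v' i + (if i = k then 1 else 0) := by
      intro i
      rw [hv' i]
      by_cases h : i = k
      · subst h; simp; omega
      · simp [h]
    have hDv' : Dv v' = m := by
      have h1 : Dv v = Dv v' + 1 := by
        rw [Dv, Dv, Finset.sum_congr rfl fun i _ => hveq i, Finset.sum_add_distrib]
        congr 1
        simp
      omega
    obtain ⟨α', hα'1, hα'2⟩ := ih v' hDv'
    refine ⟨Fin.cons k α', fun x => ?_, ?_⟩
    · rw [walkDeg_eq_sum, Fin.sum_univ_succ]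
      simp only [Fin.cons_zero, Fin.cons_succ]
      rw [← walkDeg_eq_sum, hα'1 x, Finset.sum_congr rfl fun i (_ : i ∈ Finset.univ) =>
        (by rw [hveq i, add_mul] : v i * (if x ∈ F i then 1 else 0)
          = v' i * (if x ∈ F i then 1 else 0) + (if i = k then 1 else 0) * (if x ∈ F i then 1 else 0)),
        Finset.sum_add_distrib]
      have : ∑ i : Fin q, (if i = k then 1 else 0) * (if x ∈ F i then 1 else 0)
          = (if x ∈ F k then 1 else 0) := by
        have hterm : ∀ i : Fin q, (if i = k then 1 else 0) * (if x ∈ F i then 1 else 0)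
            = if i = k then (if x ∈ F k then 1 else 0) else 0 := by
          intro i
          by_cases h : i = k
          · subst h; simp
          · simp [h]
        rw [Finset.sum_congr rfl fun i _ => hterm i, Finset.sum_ite_eq']
        simp
      rw [this]
      ring
    · rw [Fin.prod_univ_succ]
      simp only [Fin.cons_zero, Fin.cons_succ]
      rw [hα'2]
      have hX : (X k : MvPolynomial (Fin q) (MvPolynomial (Fin n) K))
          = monomial (Finsupp.single k 1) 1 := rfl
      rw [hX, monomial_mul, one_mul]
      have h6 : (Finsupp.single k 1 + v') = v := by
        ext i
        rw [Finsupp.add_apply, Finsupp.single_apply, hv' i]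
        by_cases h : i = k
        · subst h
          simp
          omega
        · rw [if_neg (fun hh => h hh.symm), if_neg h]
          omega
      rw [h6]

lemma kerSub (F : Fin q → Finset (Fin n))
    (g : MvPolynomial (Fin q) (MvPolynomial (Fin n) K)) (hg : g ∈ reesIdeal K F) :
    g ∈ Ideal.span {p : MvPolynomial (Fin q) (MvPolynomial (Fin n) K) |
      ∃ (s : ℕ) (α β : Fin s → Fin q), p = Tsf K F α β} := by
  classical
  have hg0 : reesHom K F g = 0 := RingHom.mem_ker.mp hg
  clear hg
  suffices H : ∀ (N : ℕ) (g : MvPolynomial (Fin q) (MvPolynomial (Fin n) K)),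
      (∑ v ∈ g.support, (coeff v g).support.card) < N → reesHom K F g = 0 →
      g ∈ Ideal.span {p : MvPolynomial (Fin q) (MvPolynomial (Fin n) K) |
        ∃ (s : ℕ) (α β : Fin s → Fin q), p = Tsf K F α β} by
    exact H _ g (Nat.lt_succ_self _) hg0
  intro N
  induction N with
  | zero => intro g h; exact absurd h (Nat.not_lt_zero _)
  | succ N ihN =>
    intro g hμ hker
    by_cases hgz : g = 0
    · rw [hgz]; exact Ideal.zero_mem _
    obtain ⟨v₀, hv₀⟩ := (MvPolynomial.support_nonempty).2 hgz
    have hcv₀ : coeff v₀ g ≠ 0 := MvPolynomial.mem_support_iff.1 hv₀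
    obtain ⟨u₀, hu₀⟩ := (MvPolynomial.support_nonempty (p := coeff v₀ g)).2 hcv₀
    obtain ⟨v₁, hv₁s, hv₁ne, hDeq, hAle, hu₁s⟩ := exists_pair F g hker v₀ hv₀ u₀ hu₀
    set u₁ : Fin n →₀ ℕ := (u₀ + Av F v₀) - Av F v₁ with hu₁def
    have hu₁ : u₁ + Av F v₁ = u₀ + Av F v₀ := tsub_add_cancel_of_le hAle
    set c₁ : K := coeff u₁ (coeff v₁ g) with hc₁def
    obtain ⟨α, hα1, hα2⟩ := exists_tuple (K := K) F (Dv v₀) v₁ hDeq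
    obtain ⟨β, hβ1, hβ2⟩ := exists_tuple (K := K) F (Dv v₀) v₀ rfl
    have hAv : ∀ (v : Fin q →₀ ℕ) (x : Fin n),
        Av F v x = ∑ i : Fin q, v i * (if x ∈ F i then 1 else 0) := fun v x => rfl
    have hrel : ∀ x, u₁ x + walkDeg F α x = u₀ x + walkDeg F β x := by
      intro x
      have h := congrArg (fun h : Fin n →₀ ℕ => h x) hu₁
      simp only [Finsupp.add_apply] at h
      rw [hα1 x, hβ1 x, ← hAv, ← hAv]
      exact h
    set W : Fin n →₀ ℕ := Finsupp.equivFunOnFinite.symm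
      (fun x => u₁ x - (walkDeg F β x - walkDeg F α x)) with hWdef
    set p := C (monomial W c₁) * Tsf K F α β with hpdef
    have hkey : p = monomial v₁ (monomial u₁ c₁) - monomial v₀ (monomial u₀ c₁) := by
      rw [hpdef, Tsf_eq, mul_sub, ← mul_assoc, ← mul_assoc, hα2, hβ2]
      have hW1 : W + Finsupp.equivFunOnFinite.symm
          (fun x => walkDeg F β x - walkDeg F α x) = u₁ := by
        ext x
        rw [Finsupp.add_apply]
        simp only [hWdef, ef_apply]
        have := hrel x
        omega
      have hW0 : W + Finsupp.equivFunOnFinite.symm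
          (fun x => walkDeg F α x - walkDeg F β x) = u₀ := by
        ext x
        rw [Finsupp.add_apply]
        simp only [hWdef, ef_apply]
        have := hrel x
        omega
      have e1 : C (monomial W c₁) * Cm K q (fun x => walkDeg F β x - walkDeg F α x)
          = C (monomial u₁ c₁) := by
        rw [Cm, ← map_mul, monomial_mul, mul_one, hW1]
      have e2 : C (monomial W c₁) * Cm K q (fun x => walkDeg F α x - walkDeg F β x)
          = C (monomial u₀ c₁) := by
        rw [Cm, ← map_mul, monomial_mul, mul_one, hW0]
      rw [e1, e2, C_mul_monomial, C_mul_monomial, mul_one, mul_one]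
    have hpTS : p ∈ Ideal.span {p : MvPolynomial (Fin q) (MvPolynomial (Fin n) K) |
        ∃ (s : ℕ) (α β : Fin s → Fin q), p = Tsf K F α β} :=
      Ideal.mul_mem_left _ _ (Ideal.subset_span ⟨Dv v₀, α, β, rfl⟩)
    have hpker : reesHom K F p = 0 := by
      have hTk : reesHom K F (Tsf K F α β) = 0 := RingHom.mem_ker.mp (TsfKer F α β)
      rw [hpdef, map_mul, hTk, mul_zero]
    set g' := g - p with hg'def
    have hg'ker : reesHom K F g' = 0 := by
      rw [hg'def, map_sub, hker, hpker, sub_zero]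
    have hcoeffp : ∀ v, coeff v p = (if v₁ = v then monomial u₁ c₁ else 0)
        - (if v₀ = v then monomial u₀ c₁ else 0) := by
      intro v
      rw [hkey, coeff_sub, coeff_monomial, coeff_monomial]
    have hcoeff' : ∀ v, coeff v g' = coeff v g - coeff v p := fun v => by
      rw [hg'def, coeff_sub]
    have hsupp' : g'.support ⊆ g.support := by
      intro v hv
      by_contra hvg
      have h1 : coeff v g = 0 := MvPolynomial.notMem_support_iff.1 hvg
      have h2 : v₁ ≠ v := fun h => hvg (h ▸ hv₁s)
      have h3 : v₀ ≠ v := fun h => hvg (h ▸ hv₀)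
      have : coeff v g' = 0 := by
        rw [hcoeff', h1, hcoeffp, if_neg h2, if_neg h3, sub_zero, sub_zero]
      exact MvPolynomial.mem_support_iff.1 hv this
    have hstrict : (coeff v₁ g').support.card < (coeff v₁ g).support.card := by
      have h1 : coeff v₁ g' = coeff v₁ g - monomial u₁ c₁ := by
        rw [hcoeff', hcoeffp, if_pos rfl, if_neg (fun h => hv₁ne h.symm), sub_zero]
      have h2 : (coeff v₁ g').support ⊆ (coeff v₁ g).support.erase u₁ := by
        intro u hu
        have hu' := MvPolynomial.mem_support_iff.1 hu
        rw [h1, coeff_sub, coeff_monomial] at hu'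
        by_cases h : u = u₁
        · exfalso
          apply hu'
          rw [h, if_pos rfl, hc₁def, sub_self]
        · refine Finset.mem_erase.2 ⟨h, MvPolynomial.mem_support_iff.2 ?_⟩
          rw [if_neg (fun hh => h hh.symm), sub_zero] at hu'
          exact hu'
      exact lt_of_le_of_lt (Finset.card_le_card h2) (Finset.card_erase_lt_of_mem hu₁s)
    have hle : ∀ v ∈ g.support, (coeff v g').support.card ≤ (coeff v g).support.card := by
      intro v _
      by_cases h1 : v = v₁
      · subst h1; exact le_of_lt hstrict
      by_cases h0 : v = v₀
      · rw [h0]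
        have h2 : coeff v₀ g' = coeff v₀ g + monomial u₀ c₁ := by
          rw [hcoeff', hcoeffp, if_neg hv₁ne, if_pos rfl, zero_sub, sub_neg_eq_add]
        have h3 : (coeff v₀ g').support ⊆ (coeff v₀ g).support := by
          intro u hu
          rw [h2] at hu
          rcases Finset.mem_union.1 (MvPolynomial.support_add hu) with h | h
          · exact h
          · have h4 := MvPolynomial.mem_support_iff.1 h
            rw [coeff_monomial] at h4
            have h5 : u = u₀ := by
              by_contra hne
              rw [if_neg (fun hh => hne hh.symm)] at h4
              exact h4 rfl
            rw [h5]
            exact hu₀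
        exact Finset.card_le_card h3
      · have : coeff v g' = coeff v g := by
          rw [hcoeff', hcoeffp, if_neg (fun h => h1 h.symm), if_neg (fun h => h0 h.symm),
            sub_zero, sub_zero]
        rw [this]
    have hlt : (∑ v ∈ g'.support, (coeff v g').support.card)
        < ∑ v ∈ g.support, (coeff v g).support.card := by
      calc ∑ v ∈ g'.support, (coeff v g').support.card
          ≤ ∑ v ∈ g.support, (coeff v g').support.card :=
            Finset.sum_le_sum_of_subset hsupp'
        _ < ∑ v ∈ g.support, (coeff v g).support.card :=
            Finset.sum_lt_sum hle ⟨v₁, hv₁s, hstrict⟩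
    have hmem := ihN g' (by omega) hg'ker
    have hgeq : g = g' + p := by rw [hg'def]; ring
    rw [hgeq]
    exact Ideal.add_mem _ hmem hpTS

end Stmt14Aux
theorem stmt14 {K : Type*} [Field K] {n q : ℕ}
    (F : Fin q → Finset (Fin n)) (hF : IsFacetFamily F) :
    reesIdeal K F = Ideal.span
      ({g | g ∈ reesIdeal K F ∧ g.IsHomogeneous 1} ∪
        {p | ∃ (i : ℕ) (α β : Fin i → Fin q),
          IsEvenWalk F α β ∧ p = Tsf K F α β}) := by
  apply le_antisymm
  · intro g hg
    have h1 := Stmt14Aux.kerSub F g hg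
    have h2 : Ideal.span {p : MvPolynomial (Fin q) (MvPolynomial (Fin n) K) |
        ∃ (s : ℕ) (α β : Fin s → Fin q), p = Tsf K F α β} ≤ Ideal.span
      ({g | g ∈ reesIdeal K F ∧ g.IsHomogeneous 1} ∪
        {p | ∃ (i : ℕ) (α β : Fin i → Fin q),
          IsEvenWalk F α β ∧ p = Tsf K F α β}) := by
      rw [Ideal.span_le]
      rintro p ⟨s, α, β, rfl⟩
      exact Stmt14Aux.TsfMem F s α β
    exact h2 h1
  · rw [Ideal.span_le]
    rintro p (⟨hp1, -⟩ | ⟨i, α, β, -, rfl⟩)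
    · exact hp1
    · exact Stmt14Aux.TsfKer F α β
end

section
/- Let I be a squarefree monomial ideal in R = K[x_1,…,x_n] and suppose that the facet complex F(I) contains no simplicial even walk. Then I is of linear type, i.e., the defining ideal J of the Rees algebra R[It] is generated by its elements of degree 1 in the variables T_1,…,T_q. -/
open Finset MvPolynomial

section Aux

variable {K : Type*} [Field K] {n q : ℕ}

/-- Exponent vector of the facet monomial. -/
noncomputable def chiF (F : Fin q → Finset (Fin n)) (i : Fin q) : Fin n →₀ ℕ :=
  ∑ x ∈ F i, Finsupp.single x 1

lemma chiF_apply (F : Fin q → Finset (Fin n)) (i : Fin q) (x : Fin n) :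
    chiF F i x = if x ∈ F i then 1 else 0 := by
  classical
  rw [chiF, Finset.sum_apply']
  simp_rw [Finsupp.single_apply]
  exact Finset.sum_ite_eq' _ _ _

/-- The exponent map: `σ d = ∑ d i • χ i`. -/
noncomputable def sigF (F : Fin q → Finset (Fin n)) (d : Fin q →₀ ℕ) : Fin n →₀ ℕ :=
  d.sum fun i k => k • chiF F i

lemma sigF_zero (F : Fin q → Finset (Fin n)) : sigF F 0 = 0 := by
  simp [sigF]

lemma sigF_add (F : Fin q → Finset (Fin n)) (d e : Fin q →₀ ℕ) :
    sigF F (d + e) = sigF F d + sigF F e :=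
  Finsupp.sum_add_index' (by simp) (by intro i k l; rw [add_smul])

lemma sigF_single (F : Fin q → Finset (Fin n)) (i : Fin q) (k : ℕ) :
    sigF F (Finsupp.single i k) = k • chiF F i :=
  Finsupp.sum_single_index (by simp)

lemma sigF_apply (F : Fin q → Finset (Fin n)) (d : Fin q →₀ ℕ) (x : Fin n) :
    sigF F d x = d.sum fun i k => k * (if x ∈ F i then 1 else 0) := by
  classical
  rw [sigF, Finsupp.sum_apply]
  refine Finsupp.sum_congr fun i _ => ?_
  rw [Finsupp.smul_apply, chiF_apply, smul_eq_mul]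

lemma degT_add (d e : Fin q →₀ ℕ) :
    Finsupp.degree (d + e) = Finsupp.degree d + Finsupp.degree e := by
  simp [Finsupp.degree_eq_weight_one, map_add]

lemma degT_single (i : Fin q) (k : ℕ) : Finsupp.degree (Finsupp.single i k) = k := by
  classical
  rcases eq_or_ne k 0 with rfl | hk
  · simp
  · rw [Finsupp.degree_apply, Finsupp.support_single_ne_zero _ hk, Finset.sum_singleton,
      Finsupp.single_eq_same]

lemma prod_monomial_one {γ : Type*} (s : Finset γ) (g : γ → (Fin n →₀ ℕ)) :
    (∏ i ∈ s, (monomial (g i) (1 : K))) = monomial (∑ i ∈ s, g i) 1 := by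
  classical
  induction s using Finset.cons_induction with
  | empty => simp
  | cons a s ha ih =>
      rw [Finset.prod_cons, ih, monomial_mul, one_mul, Finset.sum_cons]

lemma facetMonomial_eq (F : Fin q → Finset (Fin n)) (i : Fin q) :
    facetMonomial K F i = monomial (chiF F i) (1 : K) := by
  classical
  rw [facetMonomial, chiF, ← prod_monomial_one]
  refine Finset.prod_congr rfl fun x _ => ?_
  rw [X]

lemma psi_monomial (F : Fin q → Finset (Fin n)) (d : Fin q →₀ ℕ)
    (r : MvPolynomial (Fin n) K) :
    reesHom K F (monomial d r) =
      Polynomial.C (r * monomial (sigF F d) 1) * Polynomial.X ^ (Finsupp.degree d) := by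
  classical
  rw [reesHom, aeval_monomial]
  have h1 : ∀ i k, (Polynomial.C (facetMonomial K F i) * Polynomial.X) ^ k
      = Polynomial.C ((monomial (k • chiF F i) (1 : K) : MvPolynomial (Fin n) K))
        * Polynomial.X ^ k := by
    intro i k
    rw [mul_pow, ← Polynomial.C_pow, facetMonomial_eq, monomial_pow, one_pow]
  rw [Finsupp.prod]
  simp_rw [h1]
  rw [Finset.prod_mul_distrib, ← map_prod, prod_monomial_one, Finset.prod_pow_eq_pow_sum]
  have halg : (algebraMap (MvPolynomial (Fin n) K) (Polynomial (MvPolynomial (Fin n) K))) r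
      = Polynomial.C r := rfl
  rw [halg, ← mul_assoc, ← map_mul]
  rfl

end Aux

section Aux2

variable {K : Type*} [Field K] {n q : ℕ}

/-- The span of the degree-1 part of the Rees ideal. -/
noncomputable def WSpan (K : Type*) [Field K] {n q : ℕ} (F : Fin q → Finset (Fin n)) :
    Ideal (MvPolynomial (Fin q) (MvPolynomial (Fin n) K)) :=
  Ideal.span {g | g ∈ reesIdeal K F ∧ g.IsHomogeneous 1}

lemma binom_mem_J (F : Fin q → Finset (Fin n)) {d e : Fin q →₀ ℕ} {a b : Fin n →₀ ℕ}
    (c : K) (hdeg : Finsupp.degree d = Finsupp.degree e)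
    (hexp : a + sigF F d = b + sigF F e) :
    (monomial d (monomial a c) - monomial e (monomial b c) :
      MvPolynomial (Fin q) (MvPolynomial (Fin n) K)) ∈ reesIdeal K F := by
  rw [reesIdeal, RingHom.mem_ker, map_sub]
  rw [show ((reesHom K F) (monomial d (monomial a c)) : Polynomial (MvPolynomial (Fin n) K))
    = reesHom K F (monomial d (monomial a c)) from rfl]
  rw [psi_monomial, psi_monomial, monomial_mul, monomial_mul, hexp, hdeg, sub_self]

lemma mem_WSpan_of (F : Fin q → Finset (Fin n))
    {g : MvPolynomial (Fin q) (MvPolynomial (Fin n) K)}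
    (hJ : g ∈ reesIdeal K F) (hhom : g.IsHomogeneous 1) : g ∈ WSpan K F :=
  Ideal.subset_span ⟨hJ, hhom⟩

lemma homog_one {d : Fin q →₀ ℕ} (r : MvPolynomial (Fin n) K)
    (hd : Finsupp.degree d = 1) :
    (monomial d r : MvPolynomial (Fin q) (MvPolynomial (Fin n) K)).IsHomogeneous 1 :=
  isHomogeneous_monomial _ hd

/-- Counting a predicate along the entries of a list. -/
lemma card_filter_get {γ : Type*} (P : γ → Prop) [DecidablePred P] :
    ∀ (l : List γ),
      ((Finset.univ.filter fun t : Fin l.length => P (l.get t)).card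
        = Multiset.countP P (l : Multiset γ))
  | [] => by simp
  | hd :: tl => by
      classical
      show (Finset.univ.filter fun t : Fin (tl.length + 1) => P ((hd :: tl).get t)).card = _
      rw [Fin.card_filter_univ_succ' (fun t : Fin (tl.length + 1) => P ((hd :: tl).get t))]
      have h0 : ((hd :: tl).get (0 : Fin (tl.length + 1))) = hd := rfl
      have hs : ∀ t : Fin tl.length, ((hd :: tl).get t.succ) = tl.get t := fun t => rfl
      simp_rw [h0, hs]
      rw [card_filter_get P tl]
      rw [show ((hd :: tl : List γ) : Multiset γ) = hd ::ₘ (tl : Multiset γ) from rfl,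
        Multiset.countP_cons]
      omega

lemma card_filter_get' {γ : Type*} (P : γ → Prop) [DecidablePred P] (l : List γ)
    {s : ℕ} (h : l.length = s) :
    (Finset.univ.filter fun t : Fin s => P (l.get (Fin.cast h.symm t))).card
      = Multiset.countP P (l : Multiset γ) := by
  subst h
  rw [← card_filter_get P l]
  rfl

lemma countP_toMultiset (P : Fin q → Prop) [DecidablePred P] (d : Fin q →₀ ℕ) :
    Multiset.countP P d.toMultiset = d.sum fun i k => if P i then k else 0 := by
  classical
  induction d using Finsupp.induction with
  | zero => simp
  | single_add a b f ha hb ih =>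
      rw [Finsupp.toMultiset_add, Multiset.countP_add, ih, Finsupp.toMultiset_single,
        Multiset.countP_nsmul, Finsupp.sum_add_index' (fun i => by simp)
          (fun i k l => by split <;> simp), Finsupp.sum_single_index (by simp)]
      have : Multiset.countP P {a} = if P a then 1 else 0 := by
        rw [show ({a} : Multiset (Fin q)) = a ::ₘ 0 from rfl, Multiset.countP_cons]
        simp
      rw [this]
      split <;> simp [add_comm]

end Aux2

section Aux3

variable {K : Type*} [Field K] {n q : ℕ}

lemma sum_ite_mul (F : Fin q → Finset (Fin n)) (x : Fin n) (d : Fin q →₀ ℕ) :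
    (d.sum fun i k => k * (if x ∈ F i then 1 else 0))
      = d.sum fun i k => if x ∈ F i then k else 0 :=
  Finsupp.sum_congr fun i _ => by split <;> simp

lemma binom_step (F : Fin q → Finset (Fin n)) (i j : Fin q) (d e : Fin q →₀ ℕ)
    (a b : Fin n →₀ ℕ) (c : K) {m : ℕ}
    (hd : Finsupp.degree d = m + 2) (he : Finsupp.degree e = m + 2)
    (hexp : a + sigF F d = b + sigF F e)
    (hdi : d i ≠ 0) (hej : e j ≠ 0)
    (hlt : ∀ x : Fin n, x ∈ F j → x ∉ F i → sigF F d x < sigF F e x)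
    (IH : ∀ (d' e' : Fin q →₀ ℕ) (a' b' : Fin n →₀ ℕ) (c' : K),
      Finsupp.degree d' = m + 1 → Finsupp.degree e' = m + 1 →
      a' + sigF F d' = b' + sigF F e' →
      (monomial d' (monomial a' c') - monomial e' (monomial b' c') :
        MvPolynomial (Fin q) (MvPolynomial (Fin n) K)) ∈ WSpan K F) :
    (monomial d (monomial a c) - monomial e (monomial b c) :
      MvPolynomial (Fin q) (MvPolynomial (Fin n) K)) ∈ WSpan K F := by
  classical
  have hdle : Finsupp.single i 1 ≤ d := by
    rw [Finsupp.single_le_iff]; omega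
  have hele : Finsupp.single j 1 ≤ e := by
    rw [Finsupp.single_le_iff]; omega
  set d' := d - Finsupp.single i 1 with hd'def
  set e' := e - Finsupp.single j 1 with he'def
  have hd's : d' + Finsupp.single i 1 = d := tsub_add_cancel_of_le hdle
  have he's : e' + Finsupp.single j 1 = e := tsub_add_cancel_of_le hele
  have hsigd : sigF F d = sigF F d' + chiF F i := by
    rw [← hd's, sigF_add, sigF_single, one_smul]
  have hsige : sigF F e = sigF F e' + chiF F j := by
    rw [← he's, sigF_add, sigF_single, one_smul]
  have hptw : ∀ x, a x + sigF F d x = b x + sigF F e x := by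
    intro x
    have := DFunLike.congr_fun hexp x
    simpa [Finsupp.add_apply] using this
  have hchile : chiF F j ≤ a + chiF F i := by
    rw [Finsupp.le_def]
    intro x
    rw [chiF_apply, Finsupp.add_apply, chiF_apply]
    by_cases hxj : x ∈ F j
    · by_cases hxi : x ∈ F i
      · simp [hxj, hxi]
      · have h1 := hlt x hxj hxi
        have h2 := hptw x
        simp only [hxj, hxi, if_true, if_false]
        omega
    · simp [hxj]
  set a' := a + chiF F i - chiF F j with ha'def
  have ha's : a' + chiF F j = a + chiF F i := tsub_add_cancel_of_le hchile
  have hkey : a' + sigF F d' = b + sigF F e' := by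
    have h1 : (a' + sigF F d') + chiF F j = (b + sigF F e') + chiF F j := by
      calc (a' + sigF F d') + chiF F j = (a' + chiF F j) + sigF F d' := by
            rw [add_right_comm]
        _ = (a + chiF F i) + sigF F d' := by rw [ha's]
        _ = a + (sigF F d' + chiF F i) := by rw [add_assoc, add_comm (chiF F i)]
        _ = a + sigF F d := by rw [← hsigd]
        _ = b + sigF F e := hexp
        _ = b + (sigF F e' + chiF F j) := by rw [← hsige]
        _ = (b + sigF F e') + chiF F j := by rw [add_assoc]
    exact add_right_cancel h1
  have hdegd' : Finsupp.degree d' = m + 1 := by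
    have h1 := degT_add d' (Finsupp.single i 1)
    rw [hd's, degT_single] at h1
    omega
  have hdege' : Finsupp.degree e' = m + 1 := by
    have h1 := degT_add e' (Finsupp.single j 1)
    rw [he's, degT_single] at h1
    omega
  have B3mem : (monomial d' (monomial a' c) - monomial e' (monomial b c) :
      MvPolynomial (Fin q) (MvPolynomial (Fin n) K)) ∈ WSpan K F :=
    IH d' e' a' b c hdegd' hdege' hkey
  have LJ : (monomial (Finsupp.single i 1) (monomial a c)
      - monomial (Finsupp.single j 1) (monomial a' c) :
      MvPolynomial (Fin q) (MvPolynomial (Fin n) K)) ∈ reesIdeal K F := by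
    refine binom_mem_J F c (by rw [degT_single, degT_single]) ?_
    rw [sigF_single, sigF_single, one_smul, one_smul, ha's]
  have LW : (monomial (Finsupp.single i 1) (monomial a c)
      - monomial (Finsupp.single j 1) (monomial a' c) :
      MvPolynomial (Fin q) (MvPolynomial (Fin n) K)) ∈ WSpan K F :=
    mem_WSpan_of F LJ ((homog_one _ (degT_single i 1)).sub (homog_one _ (degT_single j 1)))
  have hsplit : (monomial d (monomial a c) - monomial e (monomial b c) :
      MvPolynomial (Fin q) (MvPolynomial (Fin n) K))
      = monomial d' (1 : MvPolynomial (Fin n) K) *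
          (monomial (Finsupp.single i 1) (monomial a c)
            - monomial (Finsupp.single j 1) (monomial a' c))
        + monomial (Finsupp.single j 1) (1 : MvPolynomial (Fin n) K) *
          (monomial d' (monomial a' c) - monomial e' (monomial b c)) := by
    rw [mul_sub, mul_sub, monomial_mul, monomial_mul, monomial_mul, monomial_mul, hd's,
      add_comm (Finsupp.single j 1) d', add_comm (Finsupp.single j 1) e', he's]
    ring
  rw [hsplit]
  exact Ideal.add_mem _ (Ideal.mul_mem_left _ _ LW) (Ideal.mul_mem_left _ _ B3mem)

end Aux3

section Aux4

variable {K : Type*} [Field K] {n q : ℕ}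

lemma binom_W (F : Fin q → Finset (Fin n))
    (hnowalk : ¬ ∃ (s : ℕ) (α β : Fin s → Fin q), IsEvenWalk F α β) :
    ∀ (m : ℕ) (d e : Fin q →₀ ℕ) (a b : Fin n →₀ ℕ) (c : K),
      Finsupp.degree d = m → Finsupp.degree e = m → a + sigF F d = b + sigF F e →
      (monomial d (monomial a c) - monomial e (monomial b c) :
        MvPolynomial (Fin q) (MvPolynomial (Fin n) K)) ∈ WSpan K F := by
  intro m
  induction m using Nat.strong_induction_on with
  | _ m IH =>
  intro d e a b c hd he hexp
  match m, hd, he with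
  | 0, hd, he =>
      have hd0 : d = 0 := (Finsupp.degree_eq_zero_iff d).mp hd
      have he0 : e = 0 := (Finsupp.degree_eq_zero_iff e).mp he
      subst hd0; subst he0
      have hab : a = b := by
        have := hexp
        rw [sigF_zero, add_zero, add_zero] at this
        exact this
      rw [hab, sub_self]
      exact zero_mem _
  | 1, hd, he =>
      exact mem_WSpan_of F (binom_mem_J F c (by rw [hd, he]) hexp)
        ((homog_one _ hd).sub (homog_one _ he))
  | (m0+2), hd, he =>
      classical
      by_cases hcom : ∃ i, d i ≠ 0 ∧ e i ≠ 0
      · obtain ⟨i, hdi, hei⟩ := hcom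
        have hdle : Finsupp.single i 1 ≤ d := by rw [Finsupp.single_le_iff]; omega
        have hele : Finsupp.single i 1 ≤ e := by rw [Finsupp.single_le_iff]; omega
        set d' := d - Finsupp.single i 1 with hd'def
        set e' := e - Finsupp.single i 1 with he'def
        have hd's : d' + Finsupp.single i 1 = d := tsub_add_cancel_of_le hdle
        have he's : e' + Finsupp.single i 1 = e := tsub_add_cancel_of_le hele
        have hsigd : sigF F d = sigF F d' + chiF F i := by
          rw [← hd's, sigF_add, sigF_single, one_smul]
        have hsige : sigF F e = sigF F e' + chiF F i := by
          rw [← he's, sigF_add, sigF_single, one_smul]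
        have hdegd' : Finsupp.degree d' = m0 + 1 := by
          have h1 := degT_add d' (Finsupp.single i 1)
          rw [hd's, degT_single] at h1
          omega
        have hdege' : Finsupp.degree e' = m0 + 1 := by
          have h1 := degT_add e' (Finsupp.single i 1)
          rw [he's, degT_single] at h1
          omega
        have hkey : a + sigF F d' = b + sigF F e' := by
          have h1 : (a + sigF F d') + chiF F i = (b + sigF F e') + chiF F i := by
            rw [add_assoc, add_assoc, ← hsigd, ← hsige]
            exact hexp
          exact add_right_cancel h1
        have B'mem := IH (m0+1) (by omega) d' e' a b c hdegd' hdege' hkey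
        have hsplit : (monomial d (monomial a c) - monomial e (monomial b c) :
            MvPolynomial (Fin q) (MvPolynomial (Fin n) K))
            = monomial (Finsupp.single i 1) (1 : MvPolynomial (Fin n) K) *
                (monomial d' (monomial a c) - monomial e' (monomial b c)) := by
          rw [mul_sub, monomial_mul, monomial_mul,
            add_comm (Finsupp.single i 1) d', add_comm (Finsupp.single i 1) e', hd's, he's]
          ring_nf
        rw [hsplit]
        exact Ideal.mul_mem_left _ _ B'mem
      · -- disjoint supports: build the walk and contradict `hnowalk`
        set ld := d.toMultiset.toList with hlddef
        set le := e.toMultiset.toList with hledef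
        have hldlen : ld.length = m0 + 2 := by
          rw [hlddef, Multiset.length_toList, Finsupp.card_toMultiset]
          exact hd
        have hlelen : le.length = m0 + 2 := by
          rw [hledef, Multiset.length_toList, Finsupp.card_toMultiset]
          exact he
        set α : Fin (m0+2) → Fin q := fun t => ld.get (Fin.cast hldlen.symm t) with hαdef
        set β : Fin (m0+2) → Fin q := fun t => le.get (Fin.cast hlelen.symm t) with hβdef
        have hrangeα : ∀ z ∈ Set.range α, d z ≠ 0 := by
          rintro z ⟨t, rfl⟩
          have h1 : α t ∈ ld := List.get_mem ld _
          rw [hlddef, Multiset.mem_toList, Finsupp.mem_toMultiset,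
            Finsupp.mem_support_iff] at h1
          exact h1
        have hrangeβ : ∀ z ∈ Set.range β, e z ≠ 0 := by
          rintro z ⟨t, rfl⟩
          have h1 : β t ∈ le := List.get_mem le _
          rw [hledef, Multiset.mem_toList, Finsupp.mem_toMultiset,
            Finsupp.mem_support_iff] at h1
          exact h1
        have hwα : ∀ x : Fin n, walkDeg F α x = sigF F d x := by
          intro x
          have h1 := card_filter_get' (fun i : Fin q => x ∈ F i) ld hldlen
          have h2 : walkDeg F α x
              = (Finset.univ.filter fun t : Fin (m0+2) =>
                  x ∈ F (ld.get (Fin.cast hldlen.symm t))).card := rfl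
          rw [h2, h1, hlddef, Multiset.coe_toList, countP_toMultiset, sigF_apply, sum_ite_mul]
        have hwβ : ∀ x : Fin n, walkDeg F β x = sigF F e x := by
          intro x
          have h1 := card_filter_get' (fun i : Fin q => x ∈ F i) le hlelen
          have h2 : walkDeg F β x
              = (Finset.univ.filter fun t : Fin (m0+2) =>
                  x ∈ F (le.get (Fin.cast hlelen.symm t))).card := rfl
          rw [h2, h1, hledef, Multiset.coe_toList, countP_toMultiset, sigF_apply, sum_ite_mul]
        have hdisj : Disjoint (Set.range α) (Set.range β) := by
          rw [Set.disjoint_left]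
          rintro z hzα hzβ
          exact hcom ⟨z, hrangeα z hzα, hrangeβ z hzβ⟩
        have hforall : ¬ (∀ i ∈ Set.range α, ∀ j ∈ Set.range β,
            ¬ (↑(F i \ F j) ⊆ {x : Fin n | walkDeg F β x < walkDeg F α x}) ∧
            ¬ (↑(F j \ F i) ⊆ {x : Fin n | walkDeg F α x < walkDeg F β x})) := by
          intro h
          exact hnowalk ⟨m0+2, α, β, by omega, hdisj, h⟩
        push_neg at hforall
        obtain ⟨i, hi, j, hj, hor⟩ := hforall
        have hdi : d i ≠ 0 := hrangeα i hi
        have hej : e j ≠ 0 := hrangeβ j hj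
        rcases em (↑(F i \ F j) ⊆ {x : Fin n | walkDeg F β x < walkDeg F α x}) with h1 | hn1
        · -- F i \ F j ⊆ {sig e < sig d} : swap roles
          have hlt : ∀ x : Fin n, x ∈ F i → x ∉ F j → sigF F e x < sigF F d x := by
            intro x hxi hxj
            have hx : x ∈ (↑(F i \ F j) : Set (Fin n)) := by
              simp only [Finset.coe_sdiff, Set.mem_diff, Finset.mem_coe, Finset.mem_sdiff]
              exact ⟨hxi, hxj⟩
            have := h1 hx
            rw [Set.mem_setOf_eq, hwα, hwβ] at this
            exact this
          have hmem := binom_step F j i e d b a c he hd hexp.symm hej hdi hlt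
            (fun d'' e'' a'' b'' c'' h1' h2' h3' =>
              IH (m0+1) (by omega) d'' e'' a'' b'' c'' h1' h2' h3')
          have hneg : (monomial d (monomial a c) - monomial e (monomial b c) :
              MvPolynomial (Fin q) (MvPolynomial (Fin n) K))
              = -(monomial e (monomial b c) - monomial d (monomial a c)) := by ring
          rw [hneg]
          exact neg_mem hmem
        · have h2 := hor hn1
          have hlt : ∀ x : Fin n, x ∈ F j → x ∉ F i → sigF F d x < sigF F e x := by
            intro x hxj hxi
            have hx : x ∈ (↑(F j \ F i) : Set (Fin n)) := by
              simp only [Finset.coe_sdiff, Set.mem_diff, Finset.mem_coe, Finset.mem_sdiff]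
              exact ⟨hxj, hxi⟩
            have := h2 hx
            rw [Set.mem_setOf_eq, hwα, hwβ] at this
            exact this
          exact binom_step F i j d e a b c hd he hexp hdi hej hlt
            (fun d'' e'' a'' b'' c'' h1' h2' h3' =>
              IH (m0+1) (by omega) d'' e'' a'' b'' c'' h1' h2' h3')

end Aux4

section Aux5

variable {K : Type*} [Field K] {n q : ℕ}

lemma psi_coeff (F : Fin q → Finset (Fin n))
    (p : MvPolynomial (Fin q) (MvPolynomial (Fin n) K)) (m : ℕ) :
    (reesHom K F p).coeff m
      = ∑ d ∈ p.support, if Finsupp.degree d = m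
          then p.coeff d * monomial (sigF F d) 1 else 0 := by
  classical
  conv_lhs => rw [p.as_sum, map_sum, Polynomial.finset_sum_coeff]
  refine Finset.sum_congr rfl fun d _ => ?_
  rw [psi_monomial, Polynomial.coeff_C_mul, Polynomial.coeff_X_pow]
  by_cases h : Finsupp.degree d = m
  · simp [h]
  · simp [h, Ne.symm h]

/-- The measure used for the induction: total number of monomials. -/
noncomputable def measureP (p : MvPolynomial (Fin q) (MvPolynomial (Fin n) K)) : ℕ :=
  ∑ d ∈ p.support, (p.coeff d).support.card

lemma mem_W_of_mem_J (F : Fin q → Finset (Fin n))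
    (hnowalk : ¬ ∃ (s : ℕ) (α β : Fin s → Fin q), IsEvenWalk F α β) :
    ∀ (N : ℕ) (p : MvPolynomial (Fin q) (MvPolynomial (Fin n) K)),
      measureP p ≤ N → p ∈ reesIdeal K F → p ∈ WSpan K F := by
  classical
  intro N
  induction N using Nat.strong_induction_on with
  | _ N IHN =>
  intro p hmeas hpJ
  by_cases hp0 : p = 0
  · rw [hp0]; exact zero_mem _
  -- pick a monomial (d, a) of p
  obtain ⟨d, hd⟩ := (MvPolynomial.support_nonempty.mpr hp0)
  have hgd : p.coeff d ≠ 0 := MvPolynomial.mem_support_iff.mp hd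
  obtain ⟨a, ha⟩ := MvPolynomial.ne_zero_iff.mp hgd
  set c := (p.coeff d).coeff a with hcdef
  set m := Finsupp.degree d with hmdef
  set v := a + sigF F d with hvdef
  have hψ : reesHom K F p = 0 := hpJ
  -- the coefficient of x^v t^m in ψ p vanishes
  have h0 : (∑ d' ∈ p.support, if Finsupp.degree d' = m
      then MvPolynomial.coeff v (p.coeff d' * monomial (sigF F d') 1) else 0) = 0 := by
    have h1 := psi_coeff F p m
    rw [hψ] at h1
    have h2 := congrArg (MvPolynomial.coeff v) h1.symm
    rw [MvPolynomial.coeff_sum] at h2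
    simpa [apply_ite (MvPolynomial.coeff v)] using h2
  -- the (d)-term of that sum is c ≠ 0
  have hterm : (if Finsupp.degree d = m
      then MvPolynomial.coeff v (p.coeff d * monomial (sigF F d) 1) else 0) = c := by
    rw [if_pos hmdef.symm, MvPolynomial.coeff_mul_monomial', if_pos le_add_self,
      hvdef, add_tsub_cancel_right, mul_one, hcdef]
  -- hence some other term is nonzero
  have hex : ∃ d' ∈ p.support, d' ≠ d ∧ (if Finsupp.degree d' = m
      then MvPolynomial.coeff v (p.coeff d' * monomial (sigF F d') 1) else 0) ≠ 0 := by
    by_contra hno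
    push_neg at hno
    have := Finset.sum_eq_single_of_mem d hd
      (fun d' hd' hne => hno d' hd' hne)
    rw [h0] at this
    have hc0 : c = 0 := by rw [← hterm, ← this]
    exact ha hc0
  obtain ⟨d', hd'supp, hd'ne, hd'term⟩ := hex
  have hdeg' : Finsupp.degree d' = m := by
    by_contra h
    rw [if_neg h] at hd'term
    exact hd'term rfl
  rw [if_pos hdeg'] at hd'term
  rw [MvPolynomial.coeff_mul_monomial'] at hd'term
  have hle : sigF F d' ≤ v := by
    by_contra h
    rw [if_neg h] at hd'term
    exact hd'term rfl
  rw [if_pos hle, mul_one] at hd'term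
  set b := v - sigF F d' with hbdef
  have hb : b + sigF F d' = v := tsub_add_cancel_of_le hle
  -- the binomial
  set B := (monomial d (monomial a c) - monomial d' (monomial b c) :
    MvPolynomial (Fin q) (MvPolynomial (Fin n) K)) with hBdef
  have hBJ : B ∈ reesIdeal K F := binom_mem_J F c (by rw [← hmdef, hdeg']) (by rw [hb])
  have hBW : B ∈ WSpan K F := binom_W F hnowalk m d d' a b c hmdef.symm hdeg' (by rw [hb])
  set p' := p - B with hp'def
  have hp'J : p' ∈ reesIdeal K F := Ideal.sub_mem _ hpJ hBJ
  -- coefficients of p'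
  have hcoeff_d : p'.coeff d = p.coeff d - monomial a c := by
    rw [hp'def, hBdef, MvPolynomial.coeff_sub, MvPolynomial.coeff_sub,
      MvPolynomial.coeff_monomial, MvPolynomial.coeff_monomial,
      if_pos rfl, if_neg hd'ne]
    ring
  have hcoeff_d' : p'.coeff d' = p.coeff d' + monomial b c := by
    rw [hp'def, hBdef, MvPolynomial.coeff_sub, MvPolynomial.coeff_sub,
      MvPolynomial.coeff_monomial, MvPolynomial.coeff_monomial,
      if_pos rfl, if_neg (Ne.symm hd'ne)]
    ring
  have hcoeff_o : ∀ d'', d'' ≠ d → d'' ≠ d' → p'.coeff d'' = p.coeff d'' := by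
    intro d'' h1 h2
    rw [hp'def, hBdef, MvPolynomial.coeff_sub, MvPolynomial.coeff_sub,
      MvPolynomial.coeff_monomial, MvPolynomial.coeff_monomial,
      if_neg (fun h => h1 h.symm), if_neg (fun h => h2 h.symm)]
    ring
  -- support inclusions
  have hsub : ∀ d'', (p'.coeff d'').support ⊆ (p.coeff d'').support := by
    intro d''
    by_cases h1 : d'' = d
    · subst h1
      intro x hx
      rw [MvPolynomial.mem_support_iff] at hx ⊢
      rw [hcoeff_d, MvPolynomial.coeff_sub, MvPolynomial.coeff_monomial] at hx
      by_cases hxa : a = x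
      · subst hxa
        rw [if_pos rfl, hcdef] at hx
        simp at hx
      · rw [if_neg hxa, sub_zero] at hx
        exact hx
    · by_cases h2 : d'' = d'
      · subst h2
        intro x hx
        rw [MvPolynomial.mem_support_iff] at hx ⊢
        rw [hcoeff_d', MvPolynomial.coeff_add, MvPolynomial.coeff_monomial] at hx
        by_cases hxb : b = x
        · subst hxb
          exact hd'term
        · rw [if_neg hxb, add_zero] at hx
          exact hx
      · rw [hcoeff_o d'' h1 h2]
  have houter : p'.support ⊆ p.support := by
    intro dd hdd
    rw [MvPolynomial.mem_support_iff] at hdd ⊢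
    intro h
    apply hdd
    have h2 : (p'.coeff dd).support ⊆ (p.coeff dd).support := hsub dd
    rw [h] at h2
    simp only [MvPolynomial.support_zero] at h2
    exact MvPolynomial.support_eq_empty.mp (Finset.subset_empty.mp h2)
  -- strict decrease of the measure
  have hdec : measureP p' < measureP p := by
    calc measureP p' = ∑ dd ∈ p'.support, (p'.coeff dd).support.card := rfl
      _ ≤ ∑ dd ∈ p.support, (p'.coeff dd).support.card :=
          Finset.sum_le_sum_of_subset houter
      _ < ∑ dd ∈ p.support, (p.coeff dd).support.card := by
          refine Finset.sum_lt_sum (fun dd _ => Finset.card_le_card (hsub dd)) ⟨d, hd, ?_⟩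
          refine Finset.card_lt_card ⟨hsub d, fun hss => ?_⟩
          have haIn : a ∈ (p.coeff d).support := MvPolynomial.mem_support_iff.mpr ha
          have haIn' := hss haIn
          rw [MvPolynomial.mem_support_iff, hcoeff_d, MvPolynomial.coeff_sub,
            MvPolynomial.coeff_monomial, if_pos rfl, hcdef, sub_self] at haIn'
          exact haIn' rfl
      _ = measureP p := rfl
  have hp'W : p' ∈ WSpan K F := IHN (measureP p') (lt_of_lt_of_le hdec hmeas) p' le_rfl hp'J
  have : p = p' + B := by rw [hp'def]; ring
  rw [this]
  exact Ideal.add_mem _ hp'W hBW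

end Aux5



theorem stmt15 {K : Type*} [Field K] {n q : ℕ}
    (F : Fin q → Finset (Fin n)) (hF : IsFacetFamily F)
    (hnowalk : ¬ ∃ (s : ℕ) (α β : Fin s → Fin q), IsEvenWalk F α β) :
    IsLinearType K F := by
  rw [IsLinearType]
  refine le_antisymm ?_ ?_
  · intro p hp
    exact mem_W_of_mem_J F hnowalk (measureP p) p le_rfl hp
  · rw [Ideal.span_le]
    rintro g ⟨hg, -⟩
    exact hg
end
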